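/- arXiv:1501.05635 — 6 statements merged into one kernel-verified Lean document; each statement's English description precedes it below -/
import Mathlib

section
/- Let Φ : 𝒞(ℝ^c) → 𝒞(ℝ^d) be a mapping such that for all C ∈ 𝒞(ℝ^c) and all x, x₁, …, x_n ∈ ℝ^c: (i) x ∈ C implies Φ({x}) ⊆ Φ(C); (ii) x ∉ C implies Φ({x}) ∩ Φ(C) = Φ(∅); (iii) the union ⋃_{x ∈ ℝ^c} Φ({x}) is convex; (iv) C ⊆ conv{x₁, …, x_n} implies Φ(C) ⊆ conv(Φ({x₁}) ∪ ⋯ ∪ Φ({x_n})). Then for every C ∈ 𝒞(ℝ^c) one has Φ(C) = (⋃_{x∈C} Φ({x})) ∪ Φ(∅), for every nonempty C ∈ 𝒞(ℝ^c) one has Φ(C) = ⋃_{x∈C} Φ({x}), and Φ is a lattice homomorphism. -/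
open Set

noncomputable section

/-- Euclidean space `ℝ^n`. -/
abbrev E (n : ℕ) := EuclideanSpace ℝ (Fin n)

/-- A convex body of `ℝ^n`: a compact convex subset (possibly empty). -/
def IsBody {n : ℕ} (C : Set (E n)) : Prop := Convex ℝ C ∧ IsCompact C

/-- `Φ` represents a lattice homomorphism from `𝒞(ℝ^c)` to `𝒞(ℝ^d)`: it maps convex bodies
to convex bodies, and on convex bodies it preserves intersections (the lattice meet) and
convex hulls of unions (the lattice join). -/
def IsLatHom {c d : ℕ} (Φ : Set (E c) → Set (E d)) : Prop :=
  (∀ C, IsBody C → IsBody (Φ C)) ∧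
  ∀ C D : Set (E c), IsBody C → IsBody D →
    Φ (C ∩ D) = Φ C ∩ Φ D ∧ Φ (convexHull ℝ (C ∪ D)) = convexHull ℝ (Φ C ∪ Φ D)

/-- `Φ` is non-trivial: it is not constant on convex bodies. -/
def NonTrivial {c d : ℕ} (Φ : Set (E c) → Set (E d)) : Prop :=
  ∃ C D : Set (E c), IsBody C ∧ IsBody D ∧ Φ C ≠ Φ D

/-- The closed ray emanating from `o` in direction `u`. -/
def Ray {n : ℕ} (o u : E n) : Set (E n) := {p | ∃ t : ℝ, 0 ≤ t ∧ p = o + t • u}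

/-- An affine hyperplane of `ℝ^n`: a nonempty affine subspace of dimension `n - 1`. -/
def IsHyperplane {n : ℕ} (H : AffineSubspace ℝ (E n)) : Prop :=
  (H : Set (E n)).Nonempty ∧ Module.finrank ℝ H.direction + 1 = n

open scoped Classical in
/-- The dimension of a convex set: the dimension of its affine hull, with `sdim ∅ = -1`. -/
def sdim {n : ℕ} (s : Set (E n)) : ℤ :=
  if s = ∅ then -1 else Module.finrank ℝ (affineSpan ℝ s).direction

/-- Auxiliary: coordinates are bounded by the Euclidean norm. -/
lemma abs_coord_le_norm {c : ℕ} (v : E c) (i : Fin c) : |v i| ≤ ‖v‖ := by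
  rw [EuclideanSpace.norm_eq]
  have h1 : |v i| = Real.sqrt (‖v i‖ ^ 2) := by
    rw [Real.sqrt_sq_eq_abs]
    simp [Real.norm_eq_abs, abs_abs]
  rw [h1]
  exact Real.sqrt_le_sqrt (Finset.single_le_sum (f := fun j => ‖v j‖ ^ 2)
    (fun j _ => sq_nonneg _) (Finset.mem_univ i))

/-- Auxiliary: any compact set is contained in the convex hull of a finite family. -/
lemma compact_subset_hull_finite {c : ℕ} (C : Set (E c)) (hC : IsCompact C) :
    ∃ (n : ℕ) (f : Fin n → E c), C ⊆ convexHull ℝ (Set.range f) := by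
  obtain ⟨R, hR⟩ := isBounded_iff_forall_norm_le.mp hC.isBounded
  set M : ℝ := max R 0 with hM
  have hMM : -M ≤ M := neg_le_self (le_max_right R 0)
  set s : Set (E c) := (WithLp.linearEquiv 2 ℝ (Fin c → ℝ)).symm ''
    Set.univ.pi (fun _ : Fin c => ({-M, M} : Set ℝ)) with hs
  have hsfin : s.Finite :=
    (Set.Finite.pi fun _ => (Set.finite_singleton M).insert (-M)).image _
  obtain ⟨n, f, -, hfr⟩ := hsfin.fin_param
  refine ⟨n, f, ?_⟩
  rw [hfr]
  intro v hv
  have hpi : convexHull ℝ s = (WithLp.linearEquiv 2 ℝ (Fin c → ℝ)).symm ''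
      Set.univ.pi (fun _ : Fin c => convexHull ℝ ({-M, M} : Set ℝ)) := by
    rw [← convexHull_pi]
    exact ((WithLp.linearEquiv 2 ℝ (Fin c → ℝ)).symm.toLinearMap.image_convexHull _).symm
  rw [hpi]
  refine ⟨WithLp.ofLp v, Set.mem_univ_pi.mpr fun i => ?_, rfl⟩
  rw [convexHull_pair, segment_eq_Icc hMM]
  refine Set.mem_Icc.mpr (abs_le.mp ?_)
  exact (abs_coord_le_norm v i).trans ((hR v hv).trans (le_max_left R 0))

/-- Auxiliary: sum of a `dite`-extension. -/
lemma sum_dite_fin {M : Type*} [AddCommMonoid M] {m n : ℕ} (hmn : m ≤ n) (g : Fin m → M) :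
    ∑ i : Fin n, (if h : (i : ℕ) < m then g ⟨i, h⟩ else 0) = ∑ k : Fin m, g k := by
  have h2 : ∑ k : Fin m, g k
      = ∑ i ∈ Finset.univ.map (Fin.castLEEmb hmn),
          (if h : (i : ℕ) < m then g ⟨i, h⟩ else 0) := by
    rw [Finset.sum_map]
    refine Finset.sum_congr rfl fun k _ => ?_
    rw [dif_pos (show ((Fin.castLEEmb hmn k : Fin n) : ℕ) < m from k.isLt)]
    rfl
  rw [h2]
  refine (Finset.sum_subset (Finset.subset_univ _) fun i _ hi => ?_).symm
  rw [dif_neg]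
  intro h
  exact hi (Finset.mem_map.2 ⟨⟨(i : ℕ), h⟩, Finset.mem_univ _, Fin.ext rfl⟩)

/-- Auxiliary: the convex hull of a compact subset of `ℝ^c` is compact. -/
lemma isCompact_hull {c : ℕ} {s : Set (E c)} (hs : IsCompact s) :
    IsCompact (convexHull ℝ s) := by
  classical
  rcases s.eq_empty_or_nonempty with rfl | ⟨p, hp⟩
  · simp
  set F : (Fin (c + 1) → ℝ) × (Fin (c + 1) → E c) → E c :=
    fun q => ∑ i, q.1 i • q.2 i with hF
  have hFc : Continuous F := by
    refine continuous_finset_sum _ fun i _ => ?_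
    exact ((continuous_apply i).comp continuous_fst).smul
      ((continuous_apply i).comp continuous_snd)
  have hK : IsCompact ((stdSimplex ℝ (Fin (c + 1))) ×ˢ
      (Set.univ.pi fun _ : Fin (c + 1) => s)) :=
    (isCompact_stdSimplex _ _).prod (isCompact_univ_pi fun _ => hs)
  have himg : convexHull ℝ s =
      F '' ((stdSimplex ℝ (Fin (c + 1))) ×ˢ (Set.univ.pi fun _ : Fin (c + 1) => s)) := by
    apply Set.Subset.antisymm
    · intro x hx
      rw [convexHull_eq_union] at hx
      simp only [Set.mem_iUnion] at hx
      obtain ⟨t, hts, hai, hxt⟩ := hx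
      have hcard : t.card ≤ c + 1 := by
        have h1 := hai.card_le_finrank_succ
        have h2 : Module.finrank ℝ (vectorSpan ℝ (Set.range ((↑) : t → E c))) ≤ c := by
          have h3 := Submodule.finrank_le (vectorSpan ℝ (Set.range ((↑) : t → E c)))
          simpa [finrank_euclideanSpace_fin] using h3
        rw [Fintype.card_coe] at h1
        omega
      rw [Finset.convexHull_eq] at hxt
      obtain ⟨w, hw0, hw1, hwx⟩ := hxt
      set m := t.card with hm
      set e : Fin m ≃ ↑t := t.equivFin.symm with he
      refine ⟨(fun i : Fin (c + 1) => if h : (i : ℕ) < m then w (e ⟨(i : ℕ), h⟩) else 0,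
               fun i : Fin (c + 1) => if h : (i : ℕ) < m then ((e ⟨(i : ℕ), h⟩ : ↑t) : E c)
                 else p), ⟨⟨?_, ?_⟩, ?_⟩, ?_⟩
      · intro i
        dsimp only
        split
        · exact hw0 _ (e _).2
        · exact le_refl 0
      · rw [sum_dite_fin hcard (fun k => w (e k))]
        rw [Equiv.sum_comp e (fun j : ↑t => w (j : E c))]
        rw [← hw1]
        exact Finset.sum_attach t w
      · refine Set.mem_univ_pi.mpr fun i => ?_
        dsimp only
        split
        · exact hts (e _).2
        · exact hp
      · simp only [hF]
        have hterm : ∀ i : Fin (c + 1),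
            (if h : (i : ℕ) < m then w (e ⟨(i : ℕ), h⟩) else 0) •
              (if h : (i : ℕ) < m then ((e ⟨(i : ℕ), h⟩ : ↑t) : E c) else p)
            = (if h : (i : ℕ) < m then w (e ⟨(i : ℕ), h⟩) • ((e ⟨(i : ℕ), h⟩ : ↑t) : E c)
               else 0) := by
          intro i
          by_cases h : (i : ℕ) < m
          · rw [dif_pos h, dif_pos h, dif_pos h]
          · rw [dif_neg h, dif_neg h, dif_neg h, zero_smul]
        rw [Finset.sum_congr rfl fun i _ => hterm i]
        rw [sum_dite_fin hcard (fun k => w (e k) • ((e k : ↑t) : E c))]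
        rw [Equiv.sum_comp e (fun j : ↑t => w (j : E c) • (j : E c))]
        rw [← hwx, Finset.centerMass_eq_of_sum_1 _ _ hw1]
        simp only [id_eq]
        exact Finset.sum_attach t (fun j => w j • j)
    · rintro x ⟨⟨w, z⟩, ⟨hw, hz⟩, rfl⟩
      refine (convex_convexHull ℝ s).sum_mem (fun i _ => hw.1 i) hw.2 fun i _ => ?_
      exact subset_convexHull ℝ s (hz i (Set.mem_univ i))
  rw [himg]
  exact hK.image hFc

/-- Conditions (i)-(iv) force `Φ(C) = ⋃_{x ∈ C} Φ({x}) ∪ Φ(∅)`, and force `Φ` to be a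
lattice homomorphism. -/
theorem stmt_2 (c d : ℕ) (Φ : Set (E c) → Set (E d))
    (hmap : ∀ C, IsBody C → IsBody (Φ C))
    (h1 : ∀ C : Set (E c), IsBody C → ∀ x : E c, x ∈ C → Φ {x} ⊆ Φ C)
    (h2 : ∀ C : Set (E c), IsBody C → ∀ x : E c, x ∉ C → Φ {x} ∩ Φ C = Φ (∅ : Set (E c)))
    (h3 : Convex ℝ (⋃ x : E c, Φ {x}))
    (h4 : ∀ C : Set (E c), IsBody C → ∀ (n : ℕ) (x : Fin n → E c),
      C ⊆ convexHull ℝ (Set.range x) → Φ C ⊆ convexHull ℝ (⋃ i, Φ {x i})) :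
    (∀ C : Set (E c), IsBody C → Φ C = (⋃ x ∈ C, Φ {x}) ∪ Φ (∅ : Set (E c))) ∧
    (∀ C : Set (E c), IsBody C → C.Nonempty → Φ C = ⋃ x ∈ C, Φ {x}) ∧
    IsLatHom Φ := by
  classical
  have hsing : ∀ x : E c, IsBody ({x} : Set (E c)) :=
    fun x => ⟨convex_singleton x, isCompact_singleton⟩
  have hempty : IsBody (∅ : Set (E c)) := ⟨convex_empty, isCompact_empty⟩
  have hes : ∀ x : E c, Φ (∅ : Set (E c)) ⊆ Φ {x} := by
    intro x y hy
    have h := h2 ∅ hempty x (Set.notMem_empty x)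
    have : y ∈ Φ {x} ∩ Φ (∅ : Set (E c)) := h.symm ▸ hy
    exact this.1
  have heC : ∀ C : Set (E c), IsBody C → Φ (∅ : Set (E c)) ⊆ Φ C := by
    intro C hC
    rcases C.eq_empty_or_nonempty with rfl | ⟨x, hx⟩
    · exact subset_rfl
    · exact (hes x).trans (h1 C hC x hx)
  -- the core: Φ C is contained in the union of all Φ {x}
  have hcore : ∀ C : Set (E c), IsBody C → Φ C ⊆ ⋃ x : E c, Φ {x} := by
    intro C hC
    obtain ⟨n, f, hf⟩ := compact_subset_hull_finite C hC.2
    refine (h4 C hC n f hf).trans (convexHull_min ?_ h3)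
    exact Set.iUnion_subset fun i => Set.subset_iUnion (fun x : E c => Φ {x}) (f i)
  -- the formula
  have formula : ∀ C : Set (E c), IsBody C →
      Φ C = (⋃ x ∈ C, Φ {x}) ∪ Φ (∅ : Set (E c)) := by
    intro C hC
    apply Set.Subset.antisymm
    · intro y hy
      obtain ⟨x, hx⟩ := Set.mem_iUnion.mp (hcore C hC hy)
      by_cases hxC : x ∈ C
      · exact Or.inl (Set.mem_biUnion hxC hx)
      · exact Or.inr ((h2 C hC x hxC) ▸ (⟨hx, hy⟩ : y ∈ Φ {x} ∩ Φ C))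
    · rintro y (hy | hy)
      · obtain ⟨x, hx, hyx⟩ := Set.mem_iUnion₂.mp hy
        exact h1 C hC x hx hyx
      · exact heC C hC hy
  have formula2 : ∀ C : Set (E c), IsBody C → C.Nonempty → Φ C = ⋃ x ∈ C, Φ {x} := by
    intro C hC ⟨x₀, hx₀⟩
    rw [formula C hC]
    refine Set.union_eq_self_of_subset_right ?_
    exact (hes x₀).trans (Set.subset_biUnion_of_mem (u := fun x : E c => Φ {x}) hx₀)
  -- monotonicity
  have mono : ∀ C D : Set (E c), IsBody C → IsBody D → C ⊆ D → Φ C ⊆ Φ D := by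
    intro C D hC hD hsub
    rw [formula C hC, formula D hD]
    exact Set.union_subset_union
      (Set.iUnion₂_mono' fun x hx => ⟨x, hsub hx, subset_rfl⟩) subset_rfl
  refine ⟨formula, formula2, hmap, fun C D hC hD => ⟨?_, ?_⟩⟩
  -- meet
  · have hCD : IsBody (C ∩ D) := ⟨hC.1.inter hD.1, hC.2.inter_right hD.2.isClosed⟩
    apply Set.Subset.antisymm
    · intro y hy
      rw [formula _ hCD] at hy
      rcases hy with hy | hy
      · obtain ⟨x, hx, hyx⟩ := Set.mem_iUnion₂.mp hy
        exact ⟨h1 C hC x hx.1 hyx, h1 D hD x hx.2 hyx⟩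
      · exact ⟨heC C hC hy, heC D hD hy⟩
    · rintro y ⟨hyC, hyD⟩
      rw [formula C hC] at hyC
      rcases hyC with hy | hy
      · obtain ⟨x, hxC, hyx⟩ := Set.mem_iUnion₂.mp hy
        by_cases hxD : x ∈ D
        · exact h1 (C ∩ D) hCD x ⟨hxC, hxD⟩ hyx
        · exact heC _ hCD ((h2 D hD x hxD) ▸ (⟨hyx, hyD⟩ : y ∈ Φ {x} ∩ Φ D))
      · exact heC _ hCD hy
  -- join
  · set K : Set (E c) := convexHull ℝ (C ∪ D) with hK
    have hKb : IsBody K := ⟨convex_convexHull ℝ _, isCompact_hull (hC.2.union hD.2)⟩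
    apply Set.Subset.antisymm
    · intro y hy
      rw [formula K hKb] at hy
      rcases hy with hy | hy
      · obtain ⟨x, hxK, hyx⟩ := Set.mem_iUnion₂.mp hy
        rw [hK, convexHull_eq_union_convexHull_finite_subsets] at hxK
        simp only [Set.mem_iUnion] at hxK
        obtain ⟨t, ht, hxt⟩ := hxK
        obtain ⟨n, f, -, hfr⟩ := t.finite_toSet.fin_param
        have hsub : ({x} : Set (E c)) ⊆ convexHull ℝ (Set.range f) := by
          rw [hfr]; exact Set.singleton_subset_iff.2 hxt
        have h5 : (⋃ i, Φ {f i}) ⊆ Φ C ∪ Φ D := by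
          refine Set.iUnion_subset fun i => ?_
          have hfi : f i ∈ C ∪ D := ht (hfr ▸ Set.mem_range_self i)
          rcases hfi with h | h
          · exact (h1 C hC _ h).trans Set.subset_union_left
          · exact (h1 D hD _ h).trans Set.subset_union_right
        exact convexHull_mono h5 (h4 {x} (hsing x) n f hsub hyx)
      · exact subset_convexHull ℝ _ (Or.inl (heC C hC hy))
    · refine convexHull_min (Set.union_subset ?_ ?_) (hmap K hKb).1
      · exact mono C K hC hKb (Set.subset_union_left.trans (subset_convexHull ℝ _))
      · exact mono D K hD hKb (Set.subset_union_right.trans (subset_convexHull ℝ _))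
end
end

section
/- Let c ≥ 2 and let Φ : 𝒞(ℝ^c) → 𝒞(ℝ^d) be a non-trivial lattice homomorphism with Φ(∅) = ∅. Then dim C ≤ dim Φ(C) for every C ∈ 𝒞(ℝ^c); in particular c ≤ d. -/
open Set

noncomputable section

section helpers
variable {n : ℕ}

lemma body_empty : IsBody (∅ : Set (E n)) := ⟨convex_empty, isCompact_empty⟩

lemma body_inter {C D : Set (E n)} (hC : IsBody C) (hD : IsBody D) : IsBody (C ∩ D) :=
  ⟨hC.1.inter hD.1, hC.2.inter_right hD.2.isClosed⟩

lemma body_point (x : E n) : IsBody ({x} : Set (E n)) :=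
  ⟨convex_singleton x, isCompact_singleton⟩

lemma body_hull_finite {s : Set (E n)} (hs : s.Finite) : IsBody (convexHull ℝ s) :=
  ⟨convex_convexHull ℝ s, hs.isCompact_convexHull ℝ⟩

variable {c d : ℕ} {Φ : Set (E c) → Set (E d)} (hΦ : IsLatHom Φ)
  (hempty : Φ (∅ : Set (E c)) = ∅)
include hΦ

lemma phi_mono {C D : Set (E c)} (hC : IsBody C) (hD : IsBody D) (h : C ⊆ D) :
    Φ C ⊆ Φ D := by
  have := (hΦ.2 C D hC hD).1
  rw [inter_eq_left.2 h] at this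
  rw [this]
  exact inter_subset_right

include hempty in
lemma phi_disjoint {C D : Set (E c)} (hC : IsBody C) (hD : IsBody D) (h : C ∩ D = ∅) :
    Φ C ∩ Φ D = ∅ := by
  rw [← (hΦ.2 C D hC hD).1, h, hempty]

include hempty in
/-- If some point maps to the empty set, then all points do. -/
lemma phi_pt_empty {x : E c} (hx : Φ {x} = ∅) (y : E c) : Φ {y} = ∅ := by
  rcases eq_or_ne y x with rfl | hne
  · exact hx
  set z : E c := x + (2:ℝ) • (y - x) with hz
  have hzy : z - y = y - x := by rw [hz, two_smul]; abel
  have hyx : y - x ≠ 0 := sub_ne_zero.2 hne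
  have hyz : y ≠ z := fun h => hyx (by rw [← hzy, ← h, sub_self])
  have hyseg : y ∈ segment ℝ x z := by
    refine ⟨1/2, 1/2, by norm_num, by norm_num, by norm_num, ?_⟩
    rw [hz, two_smul]
    module
  have hseg : IsBody (segment ℝ x z) := by
    rw [← convexHull_pair]
    exact body_hull_finite (Set.Finite.insert x (Set.finite_singleton z))
  have hsegeq : Φ (segment ℝ x z) = Φ {z} := by
    have h1 : segment ℝ x z = convexHull ℝ ({x} ∪ {z}) := by
      rw [Set.singleton_union, convexHull_pair]
    rw [h1, (hΦ.2 {x} {z} (body_point x) (body_point z)).2, hx, Set.empty_union,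
      (hΦ.1 {z} (body_point z)).1.convexHull_eq]
  have hsub : Φ {y} ⊆ Φ {z} := by
    rw [← hsegeq]
    exact phi_mono hΦ (body_point y) hseg (Set.singleton_subset_iff.2 hyseg)
  have hdis : Φ {y} ∩ Φ {z} = ∅ :=
    phi_disjoint hΦ hempty (body_point y) (body_point z)
      (by simp [Set.singleton_inter_eq_empty, hyz.symm])
  rw [← Set.inter_eq_left.2 hsub, hdis]

include hempty in
/-- If all points map to the empty set, then every body maps to the empty set. -/
lemma phi_all_empty (hpt : ∀ x : E c, Φ {x} = ∅) {C : Set (E c)} (hC : IsBody C) :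
    Φ C = ∅ := by
  -- first: convex hulls of finite sets map to ∅
  have hfin : ∀ s : Finset (E c), Φ (convexHull ℝ (s : Set (E c))) = ∅ := by
    classical
    intro s
    induction s using Finset.induction_on with
    | empty => simpa using hempty
    | @insert a s' ha ih =>
      have h1 : ((insert a s' : Finset (E c)) : Set (E c))
          = {a} ∪ (s' : Set (E c)) := by simp
      have h2 : convexHull ℝ ({a} ∪ (s' : Set (E c)))
          = convexHull ℝ ({a} ∪ convexHull ℝ (s' : Set (E c))) := by
        rw [convexHull_convexHull_union_right]
      rw [h1, h2, (hΦ.2 {a} (convexHull ℝ (s' : Set (E c))) (body_point a)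
        (body_hull_finite s'.finite_toSet)).2, hpt, ih]
      simp
  -- C is contained in a big cube
  obtain ⟨r, hr0, hrC⟩ : ∃ r : ℝ, 0 ≤ r ∧ C ⊆ Metric.closedBall 0 r := by
    obtain ⟨r, hr⟩ := hC.2.isBounded.subset_closedBall 0
    exact ⟨max r 0, le_max_right _ _, hr.trans (Metric.closedBall_subset_closedBall
      (le_max_left _ _))⟩
  set L : (Fin c → ℝ) →ₗ[ℝ] E c := (WithLp.linearEquiv 2 ℝ (Fin c → ℝ)).symm.toLinearMap with hL
  have hcube : convexHull ℝ (L '' Set.pi Set.univ (fun _ : Fin c => ({-r, r} : Set ℝ)))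
      = L '' Set.pi Set.univ fun _ => Icc (-r) r := by
    rw [← LinearMap.image_convexHull, convexHull_pi]
    congr 1
    exact Set.pi_congr rfl fun i _ => by
      rw [convexHull_pair, segment_eq_Icc (neg_le_self hr0)]
  have hVfin : (L '' Set.pi Set.univ (fun _ : Fin c => ({-r, r} : Set ℝ))).Finite :=
    (Set.Finite.pi fun _ => (Set.finite_singleton r).insert (-r)).image _
  have hCcube : C ⊆ convexHull ℝ (L '' Set.pi Set.univ (fun _ : Fin c => ({-r, r} : Set ℝ))) := by
    intro x hxC
    rw [hcube]
    refine ⟨WithLp.ofLp x, ?_, by simp [hL]⟩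
    intro i _
    have hxr : ‖x‖ ≤ r := by
      have := hrC hxC
      rwa [Metric.mem_closedBall, dist_zero_right] at this
    have h : |x i| ≤ ‖x‖ := by
      rw [EuclideanSpace.norm_eq, ← Real.sqrt_sq_eq_abs]
      apply Real.sqrt_le_sqrt
      have := Finset.single_le_sum (f := fun j => ‖x j‖^2) (fun j _ => by positivity)
        (Finset.mem_univ i)
      simpa [Real.norm_eq_abs, sq_abs] using this
    rw [mem_Icc, ← abs_le]
    exact h.trans hxr
  have hmono := phi_mono hΦ hC (body_hull_finite hVfin) hCcube
  have hfinV := hfin hVfin.toFinset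
  rw [hVfin.coe_toFinset] at hfinV
  rw [hfinV] at hmono
  exact Set.subset_empty_iff.1 hmono

include hempty in
lemma phi_pt_nonempty (hnt : NonTrivial Φ) (x : E c) : (Φ {x}).Nonempty := by
  rw [Set.nonempty_iff_ne_empty]
  intro h
  obtain ⟨C, D, hC, hD, hne⟩ := hnt
  apply hne
  rw [phi_all_empty hΦ hempty (phi_pt_empty hΦ hempty h) hC,
    phi_all_empty hΦ hempty (phi_pt_empty hΦ hempty h) hD]

lemma phi_biInter {ι : Type*} {F : ι → Set (E c)} {s : Finset ι} (hs : s.Nonempty)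
    (hF : ∀ i ∈ s, IsBody (F i)) :
    IsBody (⋂ i ∈ s, F i) ∧ Φ (⋂ i ∈ s, F i) = ⋂ i ∈ s, Φ (F i) := by
  classical
  induction hs using Finset.Nonempty.cons_induction with
  | singleton a => simp [hF a (Finset.mem_singleton_self a)]
  | cons a u ha hu ih =>
    have hFu : ∀ i ∈ u, IsBody (F i) := fun i hi => hF i (by simp [hi])
    obtain ⟨ihbody, iheq⟩ := ih hFu
    have hFa : IsBody (F a) := hF a (by simp)
    have h1 : ⋂ i ∈ Finset.cons a u ha, F i = F a ∩ ⋂ i ∈ u, F i := by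
      simp [Finset.cons_eq_insert, Set.biInter_insert]
    have h2 : ⋂ i ∈ Finset.cons a u ha, Φ (F i) = Φ (F a) ∩ ⋂ i ∈ u, Φ (F i) := by
      simp [Finset.cons_eq_insert, Set.biInter_insert]
    refine ⟨h1 ▸ body_inter hFa ihbody, ?_⟩
    rw [h1, h2, (hΦ.2 (F a) _ hFa ihbody).1, iheq]

open Module in
include hempty in
lemma phi_dim_le (hnt : NonTrivial Φ) {C : Set (E c)} (hC : IsBody C) (hne : C.Nonempty) :
    finrank ℝ (affineSpan ℝ C).direction ≤ finrank ℝ (affineSpan ℝ (Φ C)).direction := by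
  classical
  set k := finrank ℝ (affineSpan ℝ C).direction with hk
  set m := finrank ℝ (affineSpan ℝ (Φ C)).direction with hm
  by_contra hcon
  push_neg at hcon
  -- affinely independent spanning subset of C
  obtain ⟨t, htC, htspan, htind⟩ := exists_affineIndependent ℝ (E c) C
  have htfin : t.Finite := finite_set_of_fin_dim_affineIndependent ℝ htind
  obtain ⟨s, hscoe⟩ := htfin.exists_finset_coe
  subst hscoe
  have hsC : (s : Set (E c)) ⊆ C := htC
  have hsind : AffineIndependent ℝ ((↑) : ((s : Set (E c)) : Type) → E c) := htind
  have hsne : s.Nonempty := by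
    rcases hne with ⟨x, hx⟩
    rcases Finset.eq_empty_or_nonempty s with hemp | h
    · exfalso
      rw [hemp] at htspan
      have hx' := subset_affineSpan ℝ C hx
      rw [← htspan] at hx'
      simpa using hx'
    · exact h
  -- cardinality of s is k + 1
  have hcards : s.card = k + 1 := by
    have hfint : Fintype ((s : Set (E c)) : Type) := s.finite_toSet.fintype
    have hcard2 : Fintype.card ((s : Set (E c)) : Type) = s.card := by
      simp
    have h1 : finrank ℝ (vectorSpan ℝ (Set.range ((↑) : ((s : Set (E c)) : Type) → E c)))
        = s.card - 1 := by
      apply hsind.finrank_vectorSpan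
      rw [hcard2]
      have := Finset.card_pos.2 hsne
      omega
    rw [Subtype.range_coe, ← direction_affineSpan, htspan, ← hk] at h1
    have := Finset.card_pos.2 hsne
    omega
  -- the facets
  set F : E c → Set (E c) := fun a => convexHull ℝ ((s.erase a : Finset (E c)) : Set (E c))
    with hF
  have hFbody : ∀ a, IsBody (F a) := fun a => body_hull_finite (s.erase a).finite_toSet
  -- intersections of facets
  have hfacets : ∀ u : Finset (E c), u.Nonempty → u ⊆ s →
      ⋂ a ∈ u, F a = convexHull ℝ ((s \ u : Finset (E c)) : Set (E c)) := by
    intro u hu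
    induction hu using Finset.Nonempty.cons_induction with
    | singleton a =>
      intro _
      simp only [Finset.mem_singleton, Set.iInter_iInter_eq_left, hF]
      rw [Finset.sdiff_singleton_eq_erase]
    | cons a u ha hu ih =>
      intro hsub
      have hsub' : u ⊆ s := fun i hi => hsub (by simp [hi])
      have h1 : ⋂ i ∈ Finset.cons a u ha, F i = F a ∩ ⋂ i ∈ u, F i := by
        simp [Finset.cons_eq_insert, Set.biInter_insert]
      rw [h1, ih hsub', hF]
      have h2 := hsind.convexHull_inter (t₁ := s.erase a) (t₂ := s \ u)
        (Finset.erase_subset a s) (Finset.sdiff_subset)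
      rw [← h2]
      congr 1
      ext x
      simp only [Finset.coe_inter, Set.mem_inter_iff, Finset.mem_coe, Finset.mem_erase,
        Finset.mem_sdiff, Finset.mem_cons]
      constructor
      · rintro ⟨⟨hne1, hxs⟩, _, hnu⟩
        exact ⟨hxs, fun h => h.elim (fun h => hne1 h) hnu⟩
      · rintro ⟨hxs, hn⟩
        exact ⟨⟨fun h => hn (Or.inl h), hxs⟩, hxs, fun h => hn (Or.inr h)⟩
  have hinterempty : ⋂ a ∈ s, F a = ∅ := by
    rw [hfacets s hsne (le_refl s)]
    simp
  -- Φ of the intersection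
  have hFbody' : ∀ a ∈ s, IsBody (F a) := fun a _ => hFbody a
  obtain ⟨_, hPhiInter⟩ := phi_biInter hΦ hsne hFbody'
  have hPhiInterEmpty : ⋂ a ∈ s, Φ (F a) = ∅ := by
    rw [← hPhiInter, hinterempty, hempty]
  -- a base point in Φ C
  obtain ⟨x₀, hx₀⟩ := hne
  obtain ⟨p, hp'⟩ := phi_pt_nonempty hΦ hempty hnt x₀
  have hp : p ∈ Φ C := phi_mono hΦ (body_point x₀) hC (Set.singleton_subset_iff.2 hx₀) hp'
  -- work in the direction of the affine span of Φ C
  set V := (affineSpan ℝ (Φ C)).direction with hV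
  set G : E c → Set V := fun a => {v : V | (v : E d) + p ∈ Φ (F a)} with hG
  have hFsubC : ∀ a, Φ (F a) ⊆ Φ C := by
    intro a
    apply phi_mono hΦ (hFbody a) hC
    rw [hF]
    apply convexHull_min _ hC.1
    exact fun x hx => hsC (Finset.erase_subset a s hx)
  have hGconv : ∀ a ∈ s, Convex ℝ (G a) := by
    intro a _
    intro v hv w hw α β hα hβ hαβ
    have hconv := (hΦ.1 (F a) (hFbody a)).1
    have := hconv hv hw hα hβ hαβ
    show ((α • v + β • w : V) : E d) + p ∈ Φ (F a)
    have heq : ((α • v + β • w : V) : E d) + p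
        = α • ((v : E d) + p) + β • ((w : E d) + p) := by
      have h2 : α • p + β • p = p := by rw [← add_smul, hαβ, one_smul]
      have h3 : α • ((v : E d) + p) + β • ((w : E d) + p)
          = (α • (v : E d) + β • (w : E d)) + (α • p + β • p) := by module
      rw [h3, h2]
      push_cast
      abel
    rw [heq]
    exact this
  have hm' : finrank ℝ V = m := rfl
  have hsubfam : ∀ I ⊆ s, I.card ≤ finrank ℝ V + 1 → (⋂ i ∈ I, G i).Nonempty := by
    intro I hIs hIcard
    rw [hm'] at hIcard
    have hIlt : I.card < s.card := by omega
    have : (s \ I).Nonempty := by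
      rw [← Finset.card_pos, Finset.card_sdiff_of_subset hIs]
      omega
    obtain ⟨b, hb⟩ := this
    rw [Finset.mem_sdiff] at hb
    obtain ⟨hbs, hbI⟩ := hb
    obtain ⟨q, hq⟩ := phi_pt_nonempty hΦ hempty hnt b
    have hbC : b ∈ C := hsC hbs
    have hqC : q ∈ Φ C :=
      phi_mono hΦ (body_point b) hC (Set.singleton_subset_iff.2 hbC) hq
    have hqp : q - p ∈ V := by
      rw [hV]
      have h1 := subset_affineSpan ℝ (Φ C) hqC
      have h2 := subset_affineSpan ℝ (Φ C) hp
      exact AffineSubspace.vsub_mem_direction h1 h2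
    refine ⟨⟨q - p, hqp⟩, ?_⟩
    apply Set.mem_biInter
    intro i hiI
    show (q - p : E d) + p ∈ Φ (F i)
    rw [sub_add_cancel]
    have hbi : b ∈ s.erase i := Finset.mem_erase.2 ⟨fun h => hbI (h ▸ hiI), hbs⟩
    have : ({b} : Set (E c)) ⊆ F i := by
      rw [hF, Set.singleton_subset_iff]
      exact subset_convexHull ℝ _ hbi
    exact phi_mono hΦ (body_point b) (hFbody i) this hq
  have hhelly := Convex.helly_theorem' (𝕜 := ℝ) (E := V) (F := G) (s := s) hGconv hsubfam
  obtain ⟨v, hv⟩ := hhelly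
  have : ((v : E d) + p) ∈ ⋂ a ∈ s, Φ (F a) := by
    apply Set.mem_biInter
    intro a has
    exact Set.mem_iInter₂.1 hv a has
  rw [hPhiInterEmpty] at this
  exact this

end helpers

/-- A non-trivial lattice homomorphism `𝒞(ℝ^c) → 𝒞(ℝ^d)`, `c ≥ 2`, with `Φ(∅) = ∅` does
not lower dimensions; in particular `c ≤ d`. -/
theorem stmt_8 (c d : ℕ) (hc : 2 ≤ c) (Φ : Set (E c) → Set (E d))
    (hΦ : IsLatHom Φ) (hnt : NonTrivial Φ) (hempty : Φ (∅ : Set (E c)) = ∅) :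
    (∀ C : Set (E c), IsBody C → sdim C ≤ sdim (Φ C)) ∧ c ≤ d := by
  have hmain : ∀ C : Set (E c), IsBody C → sdim C ≤ sdim (Φ C) := by
    intro C hC
    rcases eq_or_ne C ∅ with rfl | hCne
    · exact le_of_eq (by rw [hempty, sdim, sdim, if_pos rfl, if_pos rfl])
    · have hne : C.Nonempty := Set.nonempty_iff_ne_empty.2 hCne
      have hΦne : (Φ C).Nonempty := by
        obtain ⟨x, hx⟩ := hne
        obtain ⟨p, hp⟩ := phi_pt_nonempty hΦ hempty hnt x
        exact ⟨p, phi_mono hΦ (body_point x) hC (Set.singleton_subset_iff.2 hx) hp⟩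
      have h := phi_dim_le hΦ hempty hnt hC hne
      rw [sdim, sdim, if_neg hCne, if_neg (Set.nonempty_iff_ne_empty.1 hΦne)]
      exact_mod_cast h
  refine ⟨hmain, ?_⟩
  haveI : Nonempty (Fin c) := ⟨⟨0, by omega⟩⟩
  set B : Set (E c) := Metric.closedBall 0 1 with hBdef
  have hB : IsBody B := ⟨convex_closedBall 0 1, isCompact_closedBall 0 1⟩
  have hspan : affineSpan ℝ B = ⊤ := by
    apply affineSpan_eq_top_of_nonempty_interior
    rw [(convex_closedBall (0 : E c) 1).convexHull_eq,
      interior_closedBall (0 : E c) one_ne_zero]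
    exact ⟨0, Metric.mem_ball_self one_pos⟩
  have hsdimB : sdim B = (c : ℤ) := by
    rw [sdim, if_neg (Set.nonempty_iff_ne_empty.1 ⟨0, Metric.mem_closedBall_self zero_le_one⟩)]
    rw [hspan, AffineSubspace.direction_top, finrank_top]
    simp [finrank_euclideanSpace_fin]
  have hsdimPhiB : sdim (Φ B) ≤ (d : ℤ) := by
    rw [sdim]
    split
    · omega
    · have : Module.finrank ℝ (affineSpan ℝ (Φ B)).direction ≤ Module.finrank ℝ (E d) :=
        Submodule.finrank_le _
      rw [finrank_euclideanSpace_fin] at this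
      exact_mod_cast this
  have := hmain B hB
  omega
end
end

section
/- Let c ≥ 2 and let Φ : 𝒞(ℝ^c) → 𝒞(ℝ^d) be a non-trivial lattice homomorphism. Let C ∈ 𝒞(ℝ^c) and x ∈ ℝ^c with x ∉ C. Then Φ({x}) is not a subset of Φ(C), and Φ(conv({x} ∪ C)) \ Φ(C) ≠ ∅. -/
open Set

noncomputable section

section Helpers
variable {c d : ℕ} {Φ : Set (E c) → Set (E d)}

lemma isBody_empty {n : ℕ} : IsBody (∅ : Set (E n)) := ⟨convex_empty, isCompact_empty⟩

lemma isBody_singleton {n : ℕ} (x : E n) : IsBody ({x} : Set (E n)) :=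
  ⟨convex_singleton x, isCompact_singleton⟩

lemma isBody_closedBall {n : ℕ} (z : E n) (r : ℝ) : IsBody (Metric.closedBall z r) :=
  ⟨convex_closedBall z r, isCompact_closedBall z r⟩

lemma isCompact_hull_insert {n : ℕ} {K : Set (E n)} (hK : Convex ℝ K) (hc : IsCompact K)
    (hne : K.Nonempty) (y : E n) : IsCompact (convexHull ℝ ({y} ∪ K)) := by
  have h1 : convexHull ℝ ({y} ∪ K) =
      (fun p : ℝ × E n => (1 - p.1) • y + p.1 • p.2) '' (Icc (0:ℝ) 1 ×ˢ K) := by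
    rw [singleton_union, convexHull_insert hne, hK.convexHull_eq]
    ext p
    simp only [convexJoin_singleton_left, mem_iUnion, segment_eq_image, mem_image,
      mem_prod, Prod.exists]
    constructor
    · rintro ⟨z, hz, θ, hθ, rfl⟩; exact ⟨θ, z, ⟨hθ, hz⟩, rfl⟩
    · rintro ⟨θ, z, ⟨hθ, hz⟩, rfl⟩; exact ⟨z, hz, θ, hθ, rfl⟩
  rw [h1]
  exact (isCompact_Icc.prod hc).image (by fun_prop)

lemma isBody_hull_insert {n : ℕ} {K : Set (E n)} (hK : IsBody K) (y : E n) :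
    IsBody (convexHull ℝ ({y} ∪ K)) := by
  rcases eq_empty_or_nonempty K with rfl | hne
  · rw [union_empty, convexHull_singleton]; exact isBody_singleton y
  · exact ⟨convex_convexHull ℝ _, isCompact_hull_insert hK.1 hK.2 hne y⟩

variable {c d : ℕ} {Φ : Set (E c) → Set (E d)}

lemma latHom_mono (hΦ : IsLatHom Φ) {A B : Set (E c)} (hA : IsBody A) (hB : IsBody B)
    (h : A ⊆ B) : Φ A ⊆ Φ B := by
  have hm := (hΦ.2 A B hA hB).1
  rw [inter_eq_left.mpr h] at hm
  rw [hm]; exact inter_subset_right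

lemma latHom_empty_subset (hΦ : IsLatHom Φ) {A : Set (E c)} (hA : IsBody A) :
    Φ ∅ ⊆ Φ A :=
  latHom_mono hΦ isBody_empty hA (empty_subset A)

lemma latHom_cone (hΦ : IsLatHom Φ) {y : E c} (hy : Φ {y} = Φ ∅) {A : Set (E c)}
    (hA : IsBody A) : Φ (convexHull ℝ ({y} ∪ A)) = Φ A := by
  have hj := (hΦ.2 {y} A (isBody_singleton y) hA).2
  rw [hj, hy, union_eq_self_of_subset_left (latHom_empty_subset hΦ hA),
    (hΦ.1 A hA).1.convexHull_eq]

lemma latHom_point (hΦ : IsLatHom Φ) (hc : 2 ≤ c) {x : E c} (hx0 : Φ {x} = Φ ∅)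
    (y : E c) : Φ {y} = Φ ∅ := by
  by_cases hyx : y = x
  · rw [hyx, hx0]
  set u : E c := y - x with hu
  have hu0 : u ≠ 0 := sub_ne_zero.mpr hyx
  obtain ⟨w, hw⟩ : ∃ w : E c, w ∉ Submodule.span ℝ {u} := by
    by_contra h
    push_neg at h
    have htop : Submodule.span ℝ ({u} : Set (E c)) = ⊤ := Submodule.eq_top_iff'.mpr h
    have h1 : Module.finrank ℝ (Submodule.span ℝ ({u} : Set (E c))) = 1 :=
      finrank_span_singleton hu0
    rw [htop, finrank_top] at h1
    have : Module.finrank ℝ (E c) = c := finrank_euclideanSpace_fin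
    omega
  set a : E c := x + (2:ℝ) • u with ha
  set m : E c := x + (4:ℝ) • u with hm
  set b₁ : E c := m + w with hb₁
  set b₂ : E c := m - w with hb₂
  set B : Set (E c) := convexHull ℝ {b₁, b₂} with hB
  have hBbody : IsBody B :=
    ⟨convex_convexHull ℝ _, (Set.toFinite {b₁, b₂}).isCompact_convexHull ℝ⟩
  -- {a} and B are disjoint
  have haB : ({a} : Set (E c)) ∩ B = ∅ := by
    rw [eq_empty_iff_forall_notMem]
    rintro p ⟨hp1, hp2⟩
    rw [mem_singleton_iff] at hp1
    subst hp1
    rw [hB, convexHull_pair] at hp2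
    obtain ⟨s, t, hs, ht, hst, hcomb⟩ := hp2
    have hkey : (s - t) • w = (-2 : ℝ) • u := by
      have : s • b₁ + t • b₂ = m + (s - t) • w := by
        rw [hb₁, hb₂]
        have : s • (m + w) + t • (m - w) = (s + t) • m + (s - t) • w := by module
        rw [this, hst, one_smul]
      rw [this] at hcomb
      have : (s - t) • w = a - m := by
        rw [← hcomb]; abel
      rw [this, ha, hm]
      module
    by_cases hst0 : s - t = 0
    · rw [hst0, zero_smul] at hkey
      exact hu0 (by simpa using hkey.symm)
    · apply hw
      have : w = ((s - t)⁻¹ * (-2)) • u := by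
        rw [mul_smul, ← hkey, ← mul_smul, inv_mul_cancel₀ hst0, one_smul]
      rw [this]
      exact Submodule.smul_mem _ _ (Submodule.mem_span_singleton_self u)
  -- Φ {y} ⊆ Φ {a}
  have hya : Φ {y} ⊆ Φ {a} := by
    have hy_mem : y ∈ convexHull ℝ ({x} ∪ {a}) := by
      have hseg : segment ℝ x a ⊆ convexHull ℝ ({x} ∪ {a}) :=
        (convex_convexHull ℝ _).segment_subset
          (subset_convexHull ℝ _ (mem_union_left _ rfl))
          (subset_convexHull ℝ _ (mem_union_right _ rfl))
      exact hseg ⟨1/2, 1/2, by norm_num, by norm_num, by norm_num, by rw [ha, hu]; module⟩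
    have hbody : IsBody (convexHull ℝ ({x} ∪ {a})) := isBody_hull_insert (isBody_singleton a) x
    have h1 : Φ {y} ⊆ Φ (convexHull ℝ ({x} ∪ {a})) :=
      latHom_mono hΦ (isBody_singleton y) hbody (singleton_subset_iff.mpr hy_mem)
    rwa [latHom_cone hΦ hx0 (isBody_singleton a)] at h1
  -- Φ {y} ⊆ Φ B
  have hyB : Φ {y} ⊆ Φ B := by
    have hmB : m ∈ B := by
      rw [hB, convexHull_pair]
      exact ⟨1/2, 1/2, by norm_num, by norm_num, by norm_num, by rw [hb₁, hb₂]; module⟩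
    have hy_mem : y ∈ convexHull ℝ ({x} ∪ B) := by
      have hseg : segment ℝ x m ⊆ convexHull ℝ ({x} ∪ B) :=
        (convex_convexHull ℝ _).segment_subset
          (subset_convexHull ℝ _ (mem_union_left _ rfl))
          (subset_convexHull ℝ _ (mem_union_right _ hmB))
      exact hseg ⟨3/4, 1/4, by norm_num, by norm_num, by norm_num, by rw [hm, hu]; module⟩
    have hbody : IsBody (convexHull ℝ ({x} ∪ B)) := isBody_hull_insert hBbody x
    have h1 : Φ {y} ⊆ Φ (convexHull ℝ ({x} ∪ B)) :=
      latHom_mono hΦ (isBody_singleton y) hbody (singleton_subset_iff.mpr hy_mem)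
    rwa [latHom_cone hΦ hx0 hBbody] at h1
  have hmeet := (hΦ.2 {a} B (isBody_singleton a) hBbody).1
  rw [haB] at hmeet
  refine Subset.antisymm ?_ (latHom_empty_subset hΦ (isBody_singleton y))
  rw [hmeet]
  exact subset_inter hya hyB

lemma latHom_cover {n : ℕ} {A : Set (E n)} {R : ℝ} (hAR : A ⊆ Metric.closedBall 0 R)
    (y : E n) : A ⊆ convexHull ℝ ({y} ∪ Metric.closedBall (-y) (2 * R)) := by
  intro p hp
  have hpR : ‖p‖ ≤ R := by simpa [Metric.mem_closedBall, dist_eq_norm] using hAR hp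
  set q : E n := (2:ℝ) • p - y with hq
  have hqB : q ∈ Metric.closedBall (-y) (2 * R) := by
    rw [Metric.mem_closedBall, dist_eq_norm]
    have : q - -y = (2:ℝ) • p := by rw [hq]; abel
    rw [this, norm_smul]
    simp only [Real.norm_ofNat]
    nlinarith
  have hseg : segment ℝ y q ⊆ convexHull ℝ ({y} ∪ Metric.closedBall (-y) (2 * R)) :=
    (convex_convexHull ℝ _).segment_subset
      (subset_convexHull ℝ _ (mem_union_left _ rfl))
      (subset_convexHull ℝ _ (mem_union_right _ hqB))
  exact hseg ⟨1/2, 1/2, by norm_num, by norm_num, by norm_num, by rw [hq]; module⟩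

lemma latHom_const (hΦ : IsLatHom Φ) (hc : 2 ≤ c) {x : E c} (hx0 : Φ {x} = Φ ∅)
    {A : Set (E c)} (hA : IsBody A) : Φ A = Φ ∅ := by
  obtain ⟨r, hr⟩ := hA.2.isBounded.subset_closedBall 0
  set R : ℝ := max r 1 with hR
  have hAR : A ⊆ Metric.closedBall 0 R :=
    hr.trans (Metric.closedBall_subset_closedBall (le_max_left r 1))
  have hR1 : (1:ℝ) ≤ R := le_max_right r 1
  set v : E c := EuclideanSpace.single (⟨0, by omega⟩ : Fin c) (1:ℝ) with hv
  have hvn : ‖v‖ = 1 := by rw [hv, EuclideanSpace.norm_single]; norm_num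
  set y₁ : E c := 0 with hy₁
  set y₂ : E c := (10 * R) • v with hy₂
  set B₁ : Set (E c) := Metric.closedBall (-y₁) (2 * R) with hB₁
  set B₂ : Set (E c) := Metric.closedBall (-y₂) (2 * R) with hB₂
  have hB₁b : IsBody B₁ := isBody_closedBall _ _
  have hB₂b : IsBody B₂ := isBody_closedBall _ _
  have hsub : ∀ (y : E c), Φ A ⊆ Φ (Metric.closedBall (-y) (2 * R)) := by
    intro y
    have h1 : Φ A ⊆ Φ (convexHull ℝ ({y} ∪ Metric.closedBall (-y) (2 * R))) :=
      latHom_mono hΦ hA (isBody_hull_insert (isBody_closedBall _ _) y)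
        (latHom_cover hAR y)
    rwa [latHom_cone hΦ (latHom_point hΦ hc hx0 y) (isBody_closedBall _ _)] at h1
  have hdisj : B₁ ∩ B₂ = ∅ := by
    apply Disjoint.inter_eq
    apply Metric.closedBall_disjoint_closedBall
    rw [dist_eq_norm]
    have : -y₁ - -y₂ = (10 * R) • v := by rw [hy₁, hy₂]; abel
    rw [this, norm_smul, hvn]
    simp only [mul_one, Real.norm_eq_abs]
    rw [abs_of_nonneg (by nlinarith)]
    nlinarith
  have hmeet := (hΦ.2 B₁ B₂ hB₁b hB₂b).1
  rw [hdisj] at hmeet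
  refine Subset.antisymm ?_ (latHom_empty_subset hΦ hA)
  rw [hmeet]
  exact subset_inter (hsub y₁) (hsub y₂)


end Helpers

/-- If `x ∉ C` then `Φ({x}) ⊄ Φ(C)` and `Φ({x} ∨ C) \ Φ(C) ≠ ∅`. -/
theorem stmt_10 (c d : ℕ) (hc : 2 ≤ c) (Φ : Set (E c) → Set (E d))
    (hΦ : IsLatHom Φ) (hnt : NonTrivial Φ)
    (C : Set (E c)) (hC : IsBody C) (x : E c) (hx : x ∉ C) :
    ¬ Φ {x} ⊆ Φ C ∧ (Φ (convexHull ℝ ({x} ∪ C)) \ Φ C).Nonempty := by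
  have hfirst : ¬ Φ {x} ⊆ Φ C := by
    intro h
    have hmeet := (hΦ.2 {x} C (isBody_singleton x) hC).1
    rw [singleton_inter_eq_empty.mpr hx, inter_eq_left.mpr h] at hmeet
    have hx0 : Φ {x} = Φ ∅ := hmeet.symm
    obtain ⟨A, B, hA, hB, hne⟩ := hnt
    exact hne ((latHom_const hΦ hc hx0 hA).trans (latHom_const hΦ hc hx0 hB).symm)
  refine ⟨hfirst, ?_⟩
  rw [diff_nonempty]
  intro h
  apply hfirst
  refine Subset.trans ?_ h
  exact latHom_mono hΦ (isBody_singleton x) (isBody_hull_insert hC x)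
    ((subset_union_left).trans (subset_convexHull ℝ _))
end
end

section
/- Let D ⊂ ℝ^d be a compact set and let 𝒴 be a family of nonempty subsets Y of the affine hull of D such that the sets conv(Y ∪ D) \ D, for Y ∈ 𝒴, are pairwise disjoint and nonempty (distinct members Y, Y' of 𝒴 give disjoint sets conv(Y ∪ D) \ D and conv(Y' ∪ D) \ D, and each such set is nonempty). Then 𝒴 is at most countable. -/
open Set

noncomputable section

/-- Countability: if `D` is compact and `𝒴` is a family of nonempty subsets of `aff(D)`
such that the sets `conv(Y ∪ D) \ D` are nonempty and pairwise disjoint, then `𝒴` is at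
most countable. -/
theorem stmt_11 (d : ℕ) (D : Set (E d)) (hD : IsCompact D)
    (𝒴 : Set (Set (E d)))
    (hne : ∀ Y ∈ 𝒴, Y.Nonempty)
    (hsub : ∀ Y ∈ 𝒴, Y ⊆ (affineSpan ℝ D : Set (E d)))
    (hne' : ∀ Y ∈ 𝒴, (convexHull ℝ (Y ∪ D) \ D).Nonempty)
    (hdisj : ∀ Y ∈ 𝒴, ∀ Y' ∈ 𝒴, Y ≠ Y' →
      Disjoint (convexHull ℝ (Y ∪ D) \ D) (convexHull ℝ (Y' ∪ D) \ D)) :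
    𝒴.Countable := by
  rcases 𝒴.eq_empty_or_nonempty with rfl | ⟨Y0, hY0⟩
  · exact countable_empty
  obtain ⟨q, hq⟩ := hne Y0 hY0
  have hpmem : q ∈ affineSpan ℝ D := hsub Y0 hY0 hq
  set A := affineSpan ℝ D with hA
  set V := A.direction with hV
  -- affine map ψ : V → E d, v ↦ q + v
  let ψ : V →ᵃ[ℝ] E d :=
    { toFun := fun v => q + v
      linear := V.subtype
      map_vadd' := by intro p v; simp [add_comm, add_assoc, add_left_comm] }
  have hψcont : Continuous ψ := by
    exact (continuous_const.add continuous_subtype_val)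
  have hψinj : Function.Injective ψ := by
    intro a b h
    have h' : q + (a : E d) = q + (b : E d) := h
    exact Subtype.ext (add_left_cancel h')
  have hrange : Set.range ψ = (A : Set (E d)) := by
    ext x
    constructor
    · rintro ⟨v, rfl⟩
      show q + (v : E d) ∈ A
      have := AffineSubspace.vadd_mem_of_mem_direction v.2 hpmem
      simpa [add_comm] using this
    · intro hx
      exact ⟨⟨x - q, AffineSubspace.vsub_mem_direction hx hpmem⟩, by simp [ψ]⟩
  -- the key family
  set g : Set (E d) → Set V := fun Y => ψ ⁻¹' (convexHull ℝ (Y ∪ D) \ D) with hg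
  have key : ∀ Y ∈ 𝒴, (interior (g Y)).Nonempty := by
    intro Y hY
    set S := convexHull ℝ (Y ∪ D) with hS
    have hSsub : S ⊆ (A : Set (E d)) := by
      rw [hS]
      apply convexHull_min _ A.convex
      exact union_subset (hsub Y hY) (subset_affineSpan ℝ D)
    set C : Set V := ψ ⁻¹' S with hC
    have hCconv : Convex ℝ C := (convex_convexHull ℝ _).affine_preimage ψ
    -- affine span of C is ⊤
    have hspan : affineSpan ℝ C = ⊤ := by
      have himg : ψ '' C = S := by
        rw [hC, Set.image_preimage_eq_inter_range, hrange]
        exact inter_eq_left.2 hSsub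
      have h1 : (affineSpan ℝ C).map ψ = affineSpan ℝ S := by
        rw [AffineSubspace.map_span, himg]
      have h2 : affineSpan ℝ S = A := by
        rw [hS, affineSpan_convexHull]
        apply le_antisymm
        · exact affineSpan_le.2 (union_subset (hsub Y hY) (subset_affineSpan ℝ D))
        · exact affineSpan_le.2 ((subset_union_right).trans (subset_affineSpan ℝ _))
      have h3 : (⊤ : AffineSubspace ℝ V).map ψ = A := by
        apply AffineSubspace.coe_injective
        rw [AffineSubspace.coe_map]
        simp [Set.image_univ, hrange]
      apply AffineSubspace.coe_injective
      have := h1.trans (h2.trans h3.symm)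
      have hcar : ψ '' (affineSpan ℝ C : Set V) = ψ '' ((⊤ : AffineSubspace ℝ V) : Set V) := by
        have e1 := congrArg (fun s : AffineSubspace ℝ (E d) => (s : Set (E d))) this
        simpa [AffineSubspace.coe_map] using e1
      exact hψinj.image_injective hcar
    have hCne : C.Nonempty := by
      obtain ⟨x, hxS, _⟩ := hne' Y hY
      obtain ⟨v, hv⟩ : ∃ v : V, ψ v = x := by
        have hx : x ∈ Set.range (ψ : V → E d) := by rw [hrange]; exact hSsub hxS
        exact hx
      exact ⟨v, show ψ v ∈ S by rw [hv]; exact hxS⟩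
    have hint : (interior C).Nonempty :=
      (hCconv.interior_nonempty_iff_affineSpan_eq_top).2 hspan
    obtain ⟨z, hz⟩ := hint
    -- point outside D
    obtain ⟨x, hxS, hxD⟩ := hne' Y hY
    obtain ⟨v0, hv0⟩ : ∃ v : V, ψ v = x := by
      have hx : x ∈ Set.range (ψ : V → E d) := by rw [hrange]; exact hSsub hxS
      exact hx
    have hv0C : v0 ∈ C := show ψ v0 ∈ S by rw [hv0]; exact hxS
    -- find t small
    have hopen : IsOpen ((fun t : ℝ => ψ (t • z + (1 - t) • v0)) ⁻¹' Dᶜ) := by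
      have hc2 : Continuous (fun t : ℝ => t • z + (1 - t) • v0) :=
        (continuous_id.smul continuous_const).add
          ((continuous_const.sub continuous_id).smul continuous_const)
      have : Continuous (fun t : ℝ => ψ (t • z + (1 - t) • v0)) := hψcont.comp hc2
      exact this.isOpen_preimage _ hD.isClosed.isOpen_compl
    have h0mem : (0 : ℝ) ∈ (fun t : ℝ => ψ (t • z + (1 - t) • v0)) ⁻¹' Dᶜ := by
      simp [hv0, hxD]
    obtain ⟨ε, hε, hball⟩ := Metric.isOpen_iff.1 hopen 0 h0mem
    set t := min (ε / 2) (1 / 2) with ht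
    have ht0 : 0 < t := lt_min (by linarith) (by norm_num)
    have ht1 : t < 1 := lt_of_le_of_lt (min_le_right _ _) (by norm_num)
    have htball : t ∈ Metric.ball (0 : ℝ) ε := by
      rw [Metric.mem_ball, Real.dist_eq, sub_zero, abs_of_pos ht0]
      exact lt_of_le_of_lt (min_le_left _ _) (by linarith)
    have htmem := hball htball
    set w := t • z + (1 - t) • v0 with hw
    have hwint : w ∈ interior C := by
      apply hCconv.openSegment_interior_self_subset_interior hz hv0C
      exact ⟨t, 1 - t, ht0, by linarith, by ring, rfl⟩
    have hwD : ψ w ∉ D := htmem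
    refine ⟨w, ?_⟩
    have hsubint : interior C ∩ ψ ⁻¹' Dᶜ ⊆ interior (g Y) := by
      apply interior_maximal
      · intro u ⟨hu1, hu2⟩
        exact ⟨(interior_subset : interior C ⊆ C) hu1, hu2⟩
      · exact isOpen_interior.inter (hψcont.isOpen_preimage _ hD.isClosed.isOpen_compl)
    exact hsubint ⟨hwint, hwD⟩
  -- disjointness
  have hpd : 𝒴.PairwiseDisjoint g := by
    intro Y hY Y' hY' hne''
    exact Disjoint.preimage ψ (hdisj Y hY Y' hY' hne'')
  exact hpd.countable_of_nonempty_interior key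
end
end

section
/- Let o ∈ ℝ^d and let ℐ be a family of (possibly degenerate) compact closed segments I ⊆ ℝ^d such that each I ∈ ℐ satisfies I ⊆ r_I \ {o} for some closed ray r_I emanating from o. Suppose that for every subfamily 𝒦 ⊆ ℐ with at most d + 1 elements there exists an affine hyperplane H ⊆ ℝ^d with o ∉ H intersecting every segment I ∈ 𝒦. Then there exists an affine hyperplane H ⊆ ℝ^d with o ∉ H that intersects every segment I ∈ ℐ. -/
open Set

noncomputable section

open scoped RealInnerProductSpace

lemma seg_param {d : ℕ} (o : E d) (I : Set (E d)) (a b : E d) (hI : I = segment ℝ a b)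
    (u : E d) (hu : u ≠ 0) (hsub : I ⊆ Ray o u \ {o}) :
    ∃ α β : ℝ, 0 < α ∧ α ≤ β ∧
      ∀ y : E d, (∃ p ∈ I, ⟪y, p - o⟫ = 1) ↔ ⟪y, u⟫ ∈ Icc α β := by
  have ha : a ∈ I := hI ▸ left_mem_segment ℝ a b
  have hb : b ∈ I := hI ▸ right_mem_segment ℝ a b
  obtain ⟨⟨s, hs0, hsa⟩, hano⟩ := hsub ha
  obtain ⟨⟨t, ht0, htb⟩, hbno⟩ := hsub hb
  have hs : 0 < s := by
    rcases hs0.lt_or_eq with h | h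
    · exact h
    · exfalso; apply hano; simp [hsa, ← h]
  have ht : 0 < t := by
    rcases ht0.lt_or_eq with h | h
    · exact h
    · exfalso; apply hbno; simp [htb, ← h]
  -- I = image of segment ℝ s t
  have hIimg : ∀ p : E d, p ∈ I ↔ ∃ r ∈ segment ℝ s t, p = o + r • u := by
    intro p
    rw [hI]
    constructor
    · rintro ⟨c₁, c₂, hc₁, hc₂, hsum, rfl⟩
      refine ⟨c₁ * s + c₂ * t, ⟨c₁, c₂, hc₁, hc₂, hsum, rfl⟩, ?_⟩
      rw [hsa, htb]
      match_scalars <;> simp [smul_eq_mul] <;> nlinarith [hsum]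
    · rintro ⟨r, ⟨c₁, c₂, hc₁, hc₂, hsum, rfl⟩, rfl⟩
      refine ⟨c₁, c₂, hc₁, hc₂, hsum, ?_⟩
      rw [hsa, htb]
      match_scalars <;> simp [smul_eq_mul] <;> nlinarith [hsum]
  set m := min s t
  set M := max s t
  have hm : 0 < m := lt_min hs ht
  have hM : m ≤ M := min_le_max
  have hM0 : 0 < M := hm.trans_le hM
  have hseg : segment ℝ s t = Icc m M := by
    rw [segment_eq_uIcc]; rfl
  refine ⟨M⁻¹, m⁻¹, by positivity, by
    apply one_div_le_one_div_of_le hm hM |>.trans_eq ?_ |>.trans_eq' ?_ <;> simp [one_div], ?_⟩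
  intro y
  constructor
  · rintro ⟨p, hp, hinner⟩
    obtain ⟨r, hr, rfl⟩ := (hIimg p).1 hp
    rw [hseg] at hr
    have hr0 : 0 < r := hm.trans_le hr.1
    have : ⟪y, o + r • u - o⟫ = r * ⟪y, u⟫ := by
      rw [add_sub_cancel_left, real_inner_smul_right]
    rw [this] at hinner
    have hyu : ⟪y, u⟫ = r⁻¹ := by field_simp at hinner ⊢; linarith
    rw [hyu]
    constructor
    · exact inv_anti₀ hr0 hr.2
    · exact inv_anti₀ hm hr.1
  · rintro ⟨h1, h2⟩
    have hc : 0 < ⟪y, u⟫ := lt_of_lt_of_le (by positivity) h1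
    refine ⟨o + (⟪y, u⟫)⁻¹ • u, ?_, ?_⟩
    · rw [hIimg]
      refine ⟨(⟪y, u⟫)⁻¹, ?_, rfl⟩
      rw [hseg]
      constructor
      · exact (le_inv_comm₀ hm hc).2 h2
      · exact (inv_le_comm₀ hc hM0).2 h1
    · rw [add_sub_cancel_left, real_inner_smul_right]
      exact inv_mul_cancel₀ hc.ne'

lemma hyperplane_of_vec {d : ℕ} (o : E d) (y : E d) (hy : y ≠ 0) :
    ∃ H : AffineSubspace ℝ (E d), IsHyperplane H ∧ o ∉ H ∧
      ∀ x : E d, x ∈ H ↔ ⟪y, x - o⟫ = 1 := by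
  set f : E d →ₗ[ℝ] ℝ := (innerSL ℝ y).toLinearMap with hf
  have hfy : ⟪y, y⟫ = ‖y‖ ^ 2 := real_inner_self_eq_norm_sq y
  have hy2 : (0:ℝ) < ‖y‖ ^ 2 := by
    have := norm_pos_iff.2 hy; positivity
  set p₀ : E d := o + (‖y‖ ^ 2)⁻¹ • y with hp₀
  have hchar : ∀ x : E d, (x -ᵥ p₀ ∈ LinearMap.ker f) ↔ ⟪y, x - o⟫ = 1 := by
    intro x
    have h1 : x - o = (x - p₀) + (‖y‖ ^ 2)⁻¹ • y := by
      rw [hp₀]; abel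
    have h2 : ⟪y, x - o⟫ = ⟪y, x - p₀⟫ + 1 := by
      rw [h1, inner_add_right, real_inner_smul_right, hfy]
      field_simp
    rw [LinearMap.mem_ker]
    have h3 : f (x -ᵥ p₀) = ⟪y, x - p₀⟫ := rfl
    rw [h3]
    constructor
    · intro h; rw [h2, h]; ring
    · intro h; rw [h2] at h; linarith
  refine ⟨AffineSubspace.mk' p₀ (LinearMap.ker f), ⟨⟨p₀, AffineSubspace.self_mem_mk' _ _⟩, ?_⟩, ?_, ?_⟩
  · rw [AffineSubspace.direction_mk']
    have hsurj : Function.Surjective f := by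
      intro c
      refine ⟨(c / ‖y‖ ^ 2) • y, ?_⟩
      have : f ((c / ‖y‖ ^ 2) • y) = (c / ‖y‖ ^ 2) * ⟪y, y⟫ := by
        simp [f, real_inner_smul_right]
      rw [this, hfy]; field_simp
    have hrn := LinearMap.finrank_range_add_finrank_ker f
    rw [LinearMap.range_eq_top.2 hsurj] at hrn
    rw [finrank_top, Module.finrank_self, finrank_euclideanSpace_fin] at hrn
    omega
  · intro ho
    rw [AffineSubspace.mem_mk', hchar] at ho
    simp at ho
  · intro x
    rw [AffineSubspace.mem_mk', hchar]

lemma vec_of_hyperplane {d : ℕ} (o : E d) (H : AffineSubspace ℝ (E d))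
    (hne : (H : Set (E d)).Nonempty) (ho : o ∉ H) :
    ∃ y : E d, ∀ x ∈ H, ⟪y, x - o⟫ = 1 := by
  obtain ⟨p, hp⟩ := hne
  set D := H.direction
  set v : E d := p - o with hv
  have hvD : v ∉ D := by
    intro hmem
    have : p -ᵥ o ∈ D := hmem
    exact ho ((AffineSubspace.vsub_left_mem_direction_iff_mem hp o).1 this)
  set v₂ : E d := v - (Submodule.orthogonalProjection D v : E d) with hv₂
  have hv₂mem : v₂ ∈ Dᗮ := Submodule.sub_starProjection_mem_orthogonal v
  have hv₂ne : v₂ ≠ 0 := by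
    intro h
    apply hvD
    have : v = (Submodule.orthogonalProjection D v : E d) := by
      have := sub_eq_zero.1 h; exact this
    rw [this]; exact Submodule.coe_mem _
  have hn2 : (0:ℝ) < ‖v₂‖ ^ 2 := by have := norm_pos_iff.2 hv₂ne; positivity
  refine ⟨(‖v₂‖ ^ 2)⁻¹ • v₂, ?_⟩
  intro x hx
  have hxp : x - p ∈ D := AffineSubspace.vsub_mem_direction hx hp
  have hsplit : x - o = (x - p) + ((Submodule.orthogonalProjection D v : E d)) + v₂ := by
    rw [hv₂, hv]; abel
  have horth : ∀ w ∈ D, ⟪(‖v₂‖ ^ 2)⁻¹ • v₂, w⟫ = 0 := by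
    intro w hw
    rw [real_inner_smul_left]
    have : ⟪w, v₂⟫ = 0 := hv₂mem w hw
    rw [real_inner_comm] at this
    rw [this]; ring
  rw [hsplit, inner_add_right, inner_add_right,
    horth _ hxp, horth _ (Submodule.coe_mem _)]
  rw [real_inner_smul_left, real_inner_self_eq_norm_sq]
  field_simp
  ring


/-- Transversality theorem for segments directed towards `o`: if every subfamily of at
most `d + 1` compact segments sitting on rays emanating from `o` (and avoiding `o`) admits
a transversal hyperplane avoiding `o`, then the whole family does (and the hyperplane
meets each segment in a single point). -/
theorem stmt_16 (d : ℕ) (o : E d) (ℐ : Set (Set (E d)))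
    (hseg : ∀ I ∈ ℐ, ∃ a b : E d, I = segment ℝ a b)
    (hray : ∀ I ∈ ℐ, ∃ u : E d, u ≠ 0 ∧ I ⊆ Ray o u \ {o})
    (hHelly : ∀ 𝒦 ⊆ ℐ, 𝒦.Finite → 𝒦.ncard ≤ d + 1 →
      ∃ H : AffineSubspace ℝ (E d), IsHyperplane H ∧ o ∉ H ∧
        ∀ I ∈ 𝒦, (I ∩ (H : Set (E d))).Nonempty) :
    ∃ H : AffineSubspace ℝ (E d), IsHyperplane H ∧ o ∉ H ∧
      ∀ I ∈ ℐ, ∃ p : E d, I ∩ (H : Set (E d)) = {p} := by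
  classical
  rcases Set.eq_empty_or_nonempty ℐ with rfl | ⟨I₀, hI₀⟩
  · obtain ⟨H, h1, h2, _⟩ := hHelly ∅ (empty_subset _) finite_empty (by simp)
    exact ⟨H, h1, h2, by simp⟩
  have hdata : ∀ i : ℐ, ∃ u : E d, u ≠ 0 ∧ ∃ α β : ℝ, 0 < α ∧ α ≤ β ∧
      ∀ y : E d, (∃ p ∈ (i : Set (E d)), ⟪y, p - o⟫ = 1) ↔ ⟪y, u⟫ ∈ Icc α β := by
    rintro ⟨I, hI⟩
    obtain ⟨a, b, hab⟩ := hseg I hI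
    obtain ⟨u, hu, hsubr⟩ := hray I hI
    obtain ⟨α, β, h1, h2, h3⟩ := seg_param o I a b hab u hu hsubr
    exact ⟨u, hu, α, β, h1, h2, h3⟩
  choose u hu α β hα hαβ hiff using hdata
  set C : ℐ → Set (E d) := fun i => {y : E d | ⟪y, u i⟫ ∈ Icc (α i) (β i)} with hC
  have hCpre : ∀ i, C i = (innerSL ℝ (u i)) ⁻¹' (Icc (α i) (β i)) := by
    intro i; ext y
    simp only [hC, Set.mem_setOf_eq, Set.mem_preimage, innerSL_apply_apply]
    rw [real_inner_comm]
  have hCclosed : ∀ i, IsClosed (C i) := fun i => by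
    rw [hCpre]; exact isClosed_Icc.preimage (innerSL ℝ (u i)).continuous
  have hCconvex : ∀ i, Convex ℝ (C i) := fun i => by
    rw [hCpre]
    exact (convex_Icc (α i) (β i)).linear_preimage (innerSL ℝ (u i) : E d →ₗ[ℝ] ℝ)
  set V : Submodule ℝ (E d) := Submodule.span ℝ (Set.range u) with hV
  obtain ⟨bs, hbsub, hbspan, hbli⟩ := exists_linearIndependent ℝ (Set.range u)
  have hbfin : bs.Finite := hbli.setFinite
  haveI : Fintype ↥bs := hbfin.fintype
  have hFex : ∀ v : bs, ∃ i : ℐ, u i = (v : E d) := fun v => hbsub v.2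
  choose F hF using hFex
  -- the distinguished finite index set
  set s₀ : Finset ℐ := Finset.univ.image F with hs₀
  -- finite Helly
  have hfinite : ∀ s : Finset ℐ, (⋂ i ∈ s, C i).Nonempty := by
    intro s
    apply Convex.helly_theorem' (𝕜 := ℝ) (fun i _ => hCconvex i)
    intro t hts hcard
    have hcard' : t.card ≤ d + 1 := by
      rwa [finrank_euclideanSpace_fin] at hcard
    set 𝒦 : Set (Set (E d)) := Subtype.val '' (t : Set ℐ) with h𝒦
    have h1 : 𝒦 ⊆ ℐ := by rintro _ ⟨i, _, rfl⟩; exact i.2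
    have h2 : 𝒦.Finite := t.finite_toSet.image _
    have h3 : 𝒦.ncard ≤ d + 1 := by
      refine le_trans (Set.ncard_image_le t.finite_toSet) ?_
      rwa [Set.ncard_coe_finset]
    obtain ⟨H, hH, hoH, hmeet⟩ := hHelly 𝒦 h1 h2 h3
    obtain ⟨y, hy⟩ := vec_of_hyperplane o H hH.1 hoH
    refine ⟨y, ?_⟩
    rw [Set.mem_iInter₂]
    intro i hi
    obtain ⟨p, hpI, hpH⟩ := hmeet i.val ⟨i, hi, rfl⟩
    exact (hiff i y).1 ⟨p, hpI, hy p hpH⟩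
  -- orthogonal projection preserves membership in C i
  have hproj : ∀ y : E d, ∀ i : ℐ, y ∈ C i →
      ((Submodule.orthogonalProjection V y : E d) ∈ C i) := by
    intro y i hyC
    have hui : u i ∈ V := Submodule.subset_span (Set.mem_range_self i)
    have horth : ⟪y - (Submodule.orthogonalProjection V y : E d), u i⟫ = 0 := by
      have hmem := Submodule.sub_starProjection_mem_orthogonal (K := V) y
      have := (Submodule.mem_orthogonal V _).1 hmem (u i) hui
      rwa [real_inner_comm]
    have heq : ⟪(Submodule.orthogonalProjection V y : E d), u i⟫ = ⟪y, u i⟫ := by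
      have := inner_sub_left (𝕜 := ℝ) y (Submodule.orthogonalProjection V y : E d) (u i)
      rw [horth] at this
      linarith [this]
    simp only [hC, Set.mem_setOf_eq] at hyC ⊢
    rw [heq]
    exact hyC
  -- the compact anchor
  set g : V →ₗ[ℝ] (bs → ℝ) :=
    LinearMap.pi (fun v : bs => ((innerSL ℝ (v : E d)).toLinearMap).comp V.subtype) with hg
  have hginj : Function.Injective g := by
    intro y z hyz
    have hkey : ∀ w : V, g w = 0 → w = 0 := by
      intro w hw
      have hwV : (w : E d) ∈ Submodule.span ℝ bs := by
        rw [hbspan]; exact w.2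
      have hbsW : bs ⊆ (LinearMap.ker ((innerSL ℝ (w : E d)).toLinearMap) : Set (E d)) := by
        intro v hv
        have h0 : ⟪v, (w : E d)⟫ = 0 := congrFun hw ⟨v, hv⟩
        simp only [SetLike.mem_coe, LinearMap.mem_ker, ContinuousLinearMap.coe_coe,
          innerSL_apply_apply]
        rw [real_inner_comm]
        exact h0
      have hle := Submodule.span_le.2 hbsW
      have : (w : E d) ∈ LinearMap.ker ((innerSL ℝ (w : E d)).toLinearMap) := hle hwV
      have hww : ⟪(w : E d), (w : E d)⟫ = 0 := this
      have : (w : E d) = 0 := inner_self_eq_zero.1 hww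
      exact Subtype.ext this
    have := hkey (y - z) (by rw [map_sub, hyz, sub_self])
    have := sub_eq_zero.1 this
    exact this
  have hemb := LinearMap.isClosedEmbedding_of_injective (LinearMap.ker_eq_bot.2 hginj)
  set Box : Set (bs → ℝ) := Set.univ.pi (fun v => Icc (α (F v)) (β (F v))) with hBoxdef
  have hBox : IsCompact Box := isCompact_univ_pi (fun v => isCompact_Icc)
  have hKc : IsCompact (g ⁻¹' Box) := hemb.isCompact_preimage hBox
  set K : Set (E d) := Subtype.val '' (g ⁻¹' Box) with hK
  have hKcomp : IsCompact K := hKc.image continuous_subtype_val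
  -- membership in K from membership in the C (F v)
  have hKmem : ∀ z : E d, z ∈ V → (∀ v : bs, z ∈ C (F v)) → z ∈ K := by
    intro z hzV hzC
    refine ⟨⟨z, hzV⟩, ?_, rfl⟩
    intro v _
    have := hzC v
    simp only [hC, Set.mem_setOf_eq] at this
    simp only [hg, LinearMap.pi_apply, LinearMap.coe_comp, Function.comp_apply,
      Submodule.coe_subtype, ContinuousLinearMap.coe_coe, innerSL_apply_apply]
    rw [real_inner_comm, ← hF v]
    exact this
  -- compactness argument
  have hmain : (K ∩ ⋂ i, C i).Nonempty := by
    apply hKcomp.inter_iInter_nonempty C hCclosed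
    intro t
    obtain ⟨y₀, hy₀⟩ := hfinite (t ∪ s₀)
    rw [Set.mem_iInter₂] at hy₀
    set z : E d := (Submodule.orthogonalProjection V y₀ : E d) with hz
    have hzC : ∀ i ∈ t ∪ s₀, z ∈ C i := fun i hi => hproj y₀ i (hy₀ i hi)
    refine ⟨z, ?_, ?_⟩
    · refine hKmem z (Submodule.coe_mem _) (fun v => ?_)
      exact hzC (F v) (Finset.mem_union_right _ (Finset.mem_image_of_mem F (Finset.mem_univ v)))
    · rw [Set.mem_iInter₂]
      exact fun i hi => hzC i (Finset.mem_union_left _ hi)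
  obtain ⟨y, _, hyC⟩ := hmain
  rw [Set.mem_iInter] at hyC
  have hy0 : y ≠ 0 := by
    intro h
    have hmem := hyC ⟨I₀, hI₀⟩
    simp only [hC, Set.mem_setOf_eq, h, inner_zero_left] at hmem
    exact absurd hmem.1 (by simpa using (hα ⟨I₀, hI₀⟩))
  obtain ⟨H, hH, hoH, hchar⟩ := hyperplane_of_vec o y hy0
  refine ⟨H, hH, hoH, ?_⟩
  intro I hI
  obtain ⟨p, hpI, hp1⟩ := (hiff ⟨I, hI⟩ y).2 (hyC ⟨I, hI⟩)
  obtain ⟨w, hw, hsubw⟩ := hray I hI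
  refine ⟨p, ?_⟩
  ext q
  simp only [Set.mem_inter_iff, Set.mem_singleton_iff]
  constructor
  · rintro ⟨hqI, hqH⟩
    obtain ⟨⟨r, hr0, rfl⟩, hqno⟩ := hsubw hqI
    obtain ⟨⟨r', hr'0, rfl⟩, hpno⟩ := hsubw hpI
    have h1 : r * ⟪y, w⟫ = 1 := by
      have := (hchar _).1 hqH
      rwa [add_sub_cancel_left, real_inner_smul_right] at this
    have h2 : r' * ⟪y, w⟫ = 1 := by
      rwa [add_sub_cancel_left, real_inner_smul_right] at hp1
    have hyw : ⟪y, w⟫ ≠ 0 := by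
      intro h; rw [h, mul_zero] at h1; exact one_ne_zero h1.symm
    have hrr : r = r' := mul_right_cancel₀ hyw (h1.trans h2.symm)
    rw [hrr]
  · rintro rfl
    exact ⟨hpI, (hchar _).2 hp1⟩
end
end

section
/- Let g ⊂ ℝ^d be a line and let ℐ be a family of (possibly degenerate) compact closed segments I ⊆ ℝ^d such that each I ∈ ℐ is contained in some line g_I parallel to g. Suppose that for every subfamily 𝒦 ⊆ ℐ with at most d + 1 elements there exists an affine hyperplane H_𝒦 ⊆ ℝ^d not parallel to g intersecting every segment I ∈ 𝒦. Then there exists an affine hyperplane H ⊆ ℝ^d not parallel to g that intersects every segment I ∈ ℐ (necessarily in a single point). -/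
open Set

noncomputable section

open Module
open scoped RealInnerProductSpace


lemma core {M : Type*} [NormedAddCommGroup M] [NormedSpace ℝ M] [FiniteDimensional ℝ M]
    (f : ℕ → M →ₗ[ℝ] ℝ) (J : ℕ → Set ℝ) (hJc : ∀ i, IsCompact (J i))
    (h : ∀ n : ℕ, ∃ x : M, ∀ i ≤ n, f i x ∈ J i) :
    ∃ x : M, ∀ i, f i x ∈ J i := by
  classical
  choose x hx using h
  -- the chain of spans of the functionals stabilizes
  set W : ℕ →o Submodule ℝ (M →ₗ[ℝ] ℝ) :=
    ⟨fun n => Submodule.span ℝ (Set.range (fun j : Fin (n+1) => f j)), by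
      intro a b hab
      apply Submodule.span_mono
      rintro - ⟨j, rfl⟩
      exact ⟨⟨j, by omega⟩, rfl⟩⟩ with hW
  obtain ⟨N, hN⟩ := monotone_stabilizes_iff_noetherian.mpr inferInstance W
  have hmem : ∀ i, f i ∈ W N := by
    intro i
    have h1 : f i ∈ W (max i N) := Submodule.subset_span ⟨⟨i, by omega⟩, rfl⟩
    rwa [← hN (max i N) (le_max_right _ _)] at h1
  -- the map to the values at the first N+1 functionals
  set Ψ : M →ₗ[ℝ] (Fin (N+1) → ℝ) := LinearMap.pi (fun j => f j) with hΨ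
  have hK : IsCompact (Set.univ.pi (fun j : Fin (N+1) => J j)) :=
    isCompact_univ_pi (fun j => hJc j)
  have hmemK : ∀ n : ℕ, Ψ (x (n + N)) ∈ Set.univ.pi (fun j : Fin (N+1) => J j) := by
    intro n
    intro j _
    exact hx (n + N) j (by omega)
  obtain ⟨v, hvK, φ, hφ, hlim⟩ := hK.tendsto_subseq hmemK
  have hrange : v ∈ LinearMap.range Ψ := by
    have hcl : IsClosed ((LinearMap.range Ψ : Submodule ℝ (Fin (N+1) → ℝ)) : Set (Fin (N+1) → ℝ)) :=
      (LinearMap.range Ψ).closed_of_finiteDimensional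
    exact hcl.mem_of_tendsto hlim (Filter.Eventually.of_forall (fun n => ⟨x (φ n + N), rfl⟩))
  obtain ⟨y, hy⟩ := hrange
  refine ⟨y, fun i => ?_⟩
  have hco : f i ∈ Submodule.span ℝ (Set.range (fun j : Fin (N+1) => f j)) := hmem i
  rw [Submodule.mem_span_range_iff_exists_fun] at hco
  obtain ⟨c, hc⟩ := hco
  have key : ∀ z : M, f i z = ∑ j : Fin (N+1), c j * Ψ z j := by
    intro z
    rw [← hc]
    simp [Ψ, LinearMap.pi_apply, LinearMap.sum_apply, LinearMap.smul_apply, smul_eq_mul]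
  have hcont : Continuous (fun t : Fin (N+1) → ℝ => ∑ j, c j * t j) := by
    continuity
  have hlim2 : Filter.Tendsto (fun n => f i (x (φ n + N))) Filter.atTop
      (nhds (∑ j, c j * v j)) := by
    have := (hcont.tendsto v).comp hlim
    convert this using 1
    funext n
    exact key (x (φ n + N))
  have hev : ∀ᶠ n in Filter.atTop, f i (x (φ n + N)) ∈ J i := by
    filter_upwards [Filter.eventually_ge_atTop i] with n hn
    exact hx (φ n + N) i (le_trans hn (le_trans (hφ.le_apply) (by omega)))
  have : (∑ j, c j * v j) ∈ J i := (hJc i).isClosed.mem_of_tendsto hlim2 hev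
  rwa [key y, hy]


-- hyperplane builder
lemma hyp_build (ν u : E d) (hνu : ⟪ν, u⟫ = 1) (r : ℝ) :
    ∃ H : AffineSubspace ℝ (E d), (H : Set (E d)) = {x | ⟪ν, x⟫ = r} ∧
      (H : Set (E d)).Nonempty ∧ finrank ℝ H.direction + 1 = d ∧ u ∉ H.direction := by
  have hf : ((innerₛₗ ℝ) ν : E d →ₗ[ℝ] ℝ) ≠ 0 := by
    intro h
    have := LinearMap.congr_fun h u
    simp [innerₛₗ_apply_apply, hνu] at this
  refine ⟨AffineSubspace.mk' (r • u) (LinearMap.ker ((innerₛₗ ℝ) ν)), ?_, ?_, ?_, ?_⟩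
  · ext x
    rw [SetLike.mem_coe, AffineSubspace.mem_mk']
    simp only [vsub_eq_sub, LinearMap.mem_ker, innerₛₗ_apply_apply, mem_setOf_eq]
    rw [inner_sub_right, inner_smul_right, hνu]
    constructor <;> intro h <;> linarith
  · exact AffineSubspace.mk'_nonempty _ _
  · rw [AffineSubspace.direction_mk']
    have := Module.Dual.finrank_ker_add_one_of_ne_zero hf
    rwa [finrank_euclideanSpace_fin] at this
  · rw [AffineSubspace.direction_mk']
    simp only [LinearMap.mem_ker, innerₛₗ_apply_apply, hνu]
    norm_num

-- hyperplane to functional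
lemma hyp_functional (H : AffineSubspace ℝ (E d)) (hne : (H : Set (E d)).Nonempty)
    (hdim : finrank ℝ H.direction + 1 = d) (u : E d) (hu : u ∉ H.direction) :
    ∃ (ν : E d) (r : ℝ), ⟪ν, u⟫ = 1 ∧ (H : Set (E d)) ⊆ {x | ⟪ν, x⟫ = r} := by
  have horth : finrank ℝ H.directionᗮ ≠ 0 := by
    have := Submodule.finrank_add_finrank_orthogonal (K := H.direction)
    rw [finrank_euclideanSpace_fin] at this
    omega
  have hbot : H.directionᗮ ≠ ⊥ := by
    intro h
    rw [h] at horth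
    simp at horth
  obtain ⟨ν0, hν0mem, hν0⟩ := Submodule.exists_mem_ne_zero_of_ne_bot hbot
  have hker : H.direction = LinearMap.ker ((innerₛₗ ℝ) ν0) := by
    have hle : H.direction ≤ LinearMap.ker ((innerₛₗ ℝ) ν0) := by
      intro x hx
      simp only [LinearMap.mem_ker, innerₛₗ_apply_apply]
      rw [real_inner_comm]
      exact hν0mem x hx
    have hfne : ((innerₛₗ ℝ) ν0 : E d →ₗ[ℝ] ℝ) ≠ 0 := by
      intro h
      have := LinearMap.congr_fun h ν0
      simp only [innerₛₗ_apply_apply, LinearMap.zero_apply] at this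
      exact hν0 (inner_self_eq_zero.mp this)
    have h2 := Module.Dual.finrank_ker_add_one_of_ne_zero hfne
    rw [finrank_euclideanSpace_fin] at h2
    exact Submodule.eq_of_le_of_finrank_le hle (by omega)
  have hνu : ⟪ν0, u⟫ ≠ 0 := by
    intro h
    apply hu
    rw [hker]
    simpa [innerₛₗ_apply_apply] using h
  obtain ⟨p, hp⟩ := hne
  refine ⟨(⟪ν0, u⟫)⁻¹ • ν0, ⟪(⟪ν0, u⟫)⁻¹ • ν0, p⟫, ?_, ?_⟩
  · rw [real_inner_smul_left]
    exact inv_mul_cancel₀ hνu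
  · intro x hx
    have hd : x - p ∈ H.direction := by
      have := AffineSubspace.vsub_mem_direction hx hp
      rwa [vsub_eq_sub] at this
    rw [hker] at hd
    simp only [LinearMap.mem_ker, innerₛₗ_apply_apply] at hd
    simp only [mem_setOf_eq]
    have : ⟪(⟪ν0, u⟫)⁻¹ • ν0, x - p⟫ = 0 := by
      rw [real_inner_smul_left, hd, mul_zero]
    rw [inner_sub_right] at this
    linarith

lemma seg_param_s17 (u a : E d) (s : ℝ) :
    segment ℝ a (a + s • u) = (fun θ : ℝ => a + θ • (s • u)) '' Icc (0:ℝ) 1 := by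
  rw [segment_eq_image']
  simp

lemma seg_inner (u a : E d) (s : ℝ) (ν : E d) (hνu : ⟪ν, u⟫ = 1) (θ : ℝ) :
    ⟪ν, a + θ • (s • u)⟫ = ⟪ν, a⟫ + θ * s := by
  rw [inner_add_right, real_inner_smul_right, real_inner_smul_right, hνu, mul_one]

lemma seg_meet (u a : E d) (s : ℝ) (hs : 0 ≤ s) (ν : E d) (hνu : ⟪ν, u⟫ = 1) (r : ℝ) :
    (segment ℝ a (a + s • u) ∩ {x | ⟪ν, x⟫ = r}).Nonempty ↔ r - ⟪ν, a⟫ ∈ Icc 0 s := by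
  rw [seg_param_s17]
  constructor
  · rintro ⟨x, ⟨θ, ⟨hθ0, hθ1⟩, rfl⟩, hx⟩
    rw [mem_setOf_eq, seg_inner u a s ν hνu] at hx
    constructor
    · nlinarith
    · nlinarith
  · rintro ⟨h0, h1⟩
    by_cases hz : s = 0
    · refine ⟨a, ⟨0, ⟨le_refl 0, zero_le_one⟩, by simp⟩, ?_⟩
      rw [hz] at h1
      simp only [mem_setOf_eq]
      linarith
    · have hs' : 0 < s := lt_of_le_of_ne hs (Ne.symm hz)
      refine ⟨a + ((r - ⟪ν, a⟫)/s) • (s • u), ⟨(r - ⟪ν, a⟫)/s, ⟨by positivity, by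
        rw [div_le_one hs']; linarith⟩, rfl⟩, ?_⟩
      rw [mem_setOf_eq, seg_inner u a s ν hνu, div_mul_cancel₀ _ hz]
      ring

lemma seg_unique (u a : E d) (s : ℝ) (ν : E d) (hνu : ⟪ν, u⟫ = 1) (r : ℝ) :
    ∀ x ∈ segment ℝ a (a + s • u) ∩ {x | ⟪ν, x⟫ = r},
    ∀ y ∈ segment ℝ a (a + s • u) ∩ {x | ⟪ν, x⟫ = r}, x = y := by
  rw [seg_param_s17]
  rintro x ⟨⟨θ1, _, rfl⟩, hx⟩ y ⟨⟨θ2, _, rfl⟩, hy⟩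
  rw [mem_setOf_eq, seg_inner u a s ν hνu] at hx hy
  have h : θ1 * s = θ2 * s := by linarith
  show a + θ1 • s • u = a + θ2 • s • u
  rw [smul_smul, smul_smul, h]

/-- Transversality theorem for parallel segments: if every subfamily of at most `d + 1`
compact segments lying on lines parallel to `g` admits a transversal hyperplane not
parallel to `g`, then the whole family does (and the hyperplane meets each segment in a
single point). -/
theorem stmt_17 (d : ℕ) (g : AffineSubspace ℝ (E d))
    (hg : Module.finrank ℝ g.direction = 1)
    (ℐ : Set (Set (E d)))
    (hseg : ∀ I ∈ ℐ, ∃ a b : E d, I = segment ℝ a b)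
    (hpar : ∀ I ∈ ℐ, ∃ gI : AffineSubspace ℝ (E d),
      gI.direction = g.direction ∧ I ⊆ (gI : Set (E d)))
    (hHelly : ∀ 𝒦 ⊆ ℐ, 𝒦.Finite → 𝒦.ncard ≤ d + 1 →
      ∃ H : AffineSubspace ℝ (E d), IsHyperplane H ∧ ¬ g.direction ≤ H.direction ∧
        ∀ I ∈ 𝒦, (I ∩ (H : Set (E d))).Nonempty) :
    ∃ H : AffineSubspace ℝ (E d), IsHyperplane H ∧ ¬ g.direction ≤ H.direction ∧
      ∀ I ∈ ℐ, ∃ p : E d, I ∩ (H : Set (E d)) = {p} := by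
  classical
  have hd1 : 1 ≤ d := by
    have h1 := Submodule.finrank_le g.direction
    rw [finrank_euclideanSpace_fin] at h1
    omega
  obtain ⟨v, hvmem, hvne⟩ := Submodule.exists_mem_ne_zero_of_ne_bot
    (p := g.direction) (by intro h; rw [h] at hg; simp at hg)
  set u : E d := ‖v‖⁻¹ • v with hu_def
  have hune : u ≠ 0 := by
    apply smul_ne_zero _ hvne
    simp [norm_ne_zero_iff.mpr hvne]
  have hunorm : ‖u‖ = 1 := norm_smul_inv_norm hvne
  have humem : u ∈ g.direction := Submodule.smul_mem _ _ hvmem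
  have huu : ⟪u, u⟫ = 1 := by
    rw [real_inner_self_eq_norm_mul_norm, hunorm]; norm_num
  have gdir : (ℝ ∙ u) = g.direction := by
    apply Submodule.eq_of_le_of_finrank_le
    · rw [Submodule.span_le, Set.singleton_subset_iff]; exact humem
    · rw [finrank_span_singleton hune, hg]
  -- normalize the segments
  have hnorm : ∀ I ∈ ℐ, ∃ a : E d, ∃ s : ℝ, 0 ≤ s ∧ I = segment ℝ a (a + s • u) := by
    intro I hI
    obtain ⟨a, b, rfl⟩ := hseg I hI
    obtain ⟨gI, hgIdir, hgIsub⟩ := hpar _ hI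
    have hab : b - a ∈ ℝ ∙ u := by
      rw [gdir]
      have h1 : a ∈ gI := hgIsub (left_mem_segment ℝ a b)
      have h2 : b ∈ gI := hgIsub (right_mem_segment ℝ a b)
      have := AffineSubspace.vsub_mem_direction h2 h1
      rwa [vsub_eq_sub, hgIdir] at this
    rw [Submodule.mem_span_singleton] at hab
    obtain ⟨t, ht⟩ := hab
    rcases le_or_gt 0 t with h | h
    · refine ⟨a, t, h, ?_⟩
      have hb : a + t • u = b := by rw [ht]; abel
      rw [hb]
    · refine ⟨b, -t, by linarith, ?_⟩
      have ha : b + (-t) • u = a := by rw [neg_smul, ht]; abel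
      rw [segment_symm, ha]
  choose! A S hS0 hIseg using hnorm
  -- the parameter space
  set V : Submodule ℝ (E d) := (ℝ ∙ u)ᗮ with hV
  have hMfr : finrank ℝ (↥V × ℝ) = d := by
    have h1 := Submodule.finrank_add_finrank_orthogonal (K := (ℝ ∙ u))
    rw [finrank_euclideanSpace_fin, finrank_span_singleton hune] at h1
    rw [Module.finrank_prod, Module.finrank_self, ← hV] at *
    omega
  have hwu : ∀ w : V, ⟪u, (w : E d)⟫ = 0 := fun w =>
    w.2 u (Submodule.mem_span_singleton_self u)
  have hνu1 : ∀ w : V, ⟪u + (w : E d), u⟫ = 1 := by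
    intro w
    rw [inner_add_left, huu, real_inner_comm, hwu w]
    norm_num
  -- the constraint functionals and sets
  set ι := {I // I ∈ ℐ}
  set G : E d → (↥V × ℝ →ₗ[ℝ] ℝ) := fun a =>
    LinearMap.snd ℝ ↥V ℝ - (((innerₛₗ ℝ) a).comp V.subtype).comp (LinearMap.fst ℝ ↥V ℝ)
    with hG
  have hGapp : ∀ (a : E d) (p : ↥V × ℝ), G a p = p.2 - ⟪a, (p.1 : E d)⟫ := by
    intro a p
    simp [hG]
  set K : ι → Set (↥V × ℝ) := fun i =>
    (G (A i.1)) ⁻¹' (Icc (⟪u, A i.1⟫) (⟪u, A i.1⟫ + S i.1)) with hKdef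
  have hK : ∀ (p : ↥V × ℝ) (i : ι),
      p ∈ K i ↔ p.2 - ⟪u + (p.1 : E d), A i.1⟫ ∈ Icc 0 (S i.1) := by
    intro p i
    simp only [hKdef, mem_preimage, mem_Icc, hGapp, inner_add_left]
    have hcomm : ⟪(p.1 : E d), A i.1⟫ = ⟪A i.1, (p.1 : E d)⟫ := real_inner_comm _ _
    constructor <;> rintro ⟨h1, h2⟩ <;> constructor <;> linarith
  -- finite intersections are nonempty, by Helly's theorem
  have hFin : ∀ F : Finset ι, (⋂ i ∈ F, K i).Nonempty := by
    intro F
    apply Convex.helly_theorem' (𝕜 := ℝ)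
    · intro i _
      exact (convex_Icc _ _).linear_preimage (G (A i.1))
    · intro T hTF hTcard
      rw [hMfr] at hTcard
      set 𝒦 : Set (Set (E d)) := Subtype.val '' (T : Set ι) with h𝒦
      have h1 : 𝒦 ⊆ ℐ := by rintro - ⟨i, -, rfl⟩; exact i.2
      have h2 : 𝒦.Finite := T.finite_toSet.image _
      have h3 : 𝒦.ncard ≤ d + 1 := by
        calc 𝒦.ncard ≤ (T : Set ι).ncard := Set.ncard_image_le T.finite_toSet
        _ = T.card := Set.ncard_coe_finset T
        _ ≤ d + 1 := hTcard
      obtain ⟨H, ⟨hHne, hHdim⟩, hHpar, hHmeet⟩ := hHelly 𝒦 h1 h2 h3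
      have hu_notin : u ∉ H.direction := by
        intro hmem
        apply hHpar
        rw [← gdir, Submodule.span_le, Set.singleton_subset_iff]
        exact hmem
      obtain ⟨ν, r, hν1, hνsub⟩ := hyp_functional H hHne hHdim u hu_notin
      have hwV : ν - u ∈ V := by
        intro y hy
        rw [Submodule.mem_span_singleton] at hy
        obtain ⟨t, rfl⟩ := hy
        rw [real_inner_smul_left, inner_sub_right, huu]
        rw [real_inner_comm u ν] at hν1
        rw [hν1]
        ring
      refine ⟨(⟨ν - u, hwV⟩, r), ?_⟩
      rw [Set.mem_iInter₂]
      intro i hiT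
      rw [hK]
      simp only
      have hνeq : u + (ν - u) = ν := by abel
      rw [hνeq]
      have hmeet : ((↑i : Set (E d)) ∩ {x | ⟪ν, x⟫ = r}).Nonempty := by
        obtain ⟨x, hx1, hx2⟩ := hHmeet i.1 ⟨i, hiT, rfl⟩
        exact ⟨x, hx1, hνsub hx2⟩
      rw [hIseg i.1 i.2] at hmeet
      exact (seg_meet u (A i.1) (S i.1) (hS0 i.1 i.2) ν hν1 r).mp hmeet
  -- dispose of the trivial case
  by_cases hempty : ℐ = ∅
  · obtain ⟨H, h1, h2, -⟩ := hHelly ∅ (by simp) finite_empty (by simp)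
    exact ⟨H, h1, h2, by simp [hempty]⟩
  obtain ⟨I0, hI0⟩ := Set.nonempty_iff_ne_empty.mpr hempty
  -- countable dense subfamily of constraints
  set T : Set (E d × ℝ) := Set.range (fun i : ι => (A i.1, S i.1)) with hT
  obtain ⟨D, hDT, hDc, hTD⟩ :=
    (TopologicalSpace.IsSeparable.of_separableSpace T).exists_countable_dense_subset
  have hDne : D.Nonempty := by
    rcases D.eq_empty_or_nonempty with h | h
    · exfalso
      rw [h] at hTD
      simp only [closure_empty, subset_empty_iff] at hTD
      exact absurd hTD (by
        apply Set.Nonempty.ne_empty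
        exact ⟨_, ⟨⟨I0, hI0⟩, rfl⟩⟩)
    · exact h
  obtain ⟨e, rfl⟩ := hDc.exists_eq_range hDne
  have hind : ∀ n : ℕ, ∃ i : ι, (A i.1, S i.1) = e n := fun n => hDT ⟨n, rfl⟩
  choose ind hinde using hind
  -- apply the limiting argument
  obtain ⟨x, hx⟩ := core (M := ↥V × ℝ) (fun n => G (A (ind n).1))
    (fun n => Icc (⟪u, A (ind n).1⟫) (⟪u, A (ind n).1⟫ + S (ind n).1))
    (fun n => isCompact_Icc)
    (by
      intro n
      obtain ⟨x, hx⟩ := hFin (Finset.image ind (Finset.range (n + 1)))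
      refine ⟨x, fun m hm => ?_⟩
      have : x ∈ K (ind m) := by
        rw [Set.mem_iInter₂] at hx
        exact hx (ind m) (Finset.mem_image_of_mem ind (Finset.mem_range.mpr (by omega)))
      exact this)
  have hxK : ∀ n : ℕ, x ∈ K (ind n) := fun n => hx n
  -- transfer to all constraints by density
  set ν : E d := u + (x.1 : E d) with hν
  have hν1 : ⟪ν, u⟫ = 1 := hνu1 x.1
  set Z : Set (E d × ℝ) := {q | x.2 - ⟪ν, q.1⟫ ∈ Icc 0 q.2} with hZ
  have hZclosed : IsClosed Z := by
    have hcont : Continuous fun q : E d × ℝ => x.2 - ⟪ν, q.1⟫ :=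
      continuous_const.sub (Continuous.inner continuous_const continuous_fst)
    have : Z = {q : E d × ℝ | 0 ≤ x.2 - ⟪ν, q.1⟫} ∩ {q : E d × ℝ | x.2 - ⟪ν, q.1⟫ ≤ q.2} := by
      ext q; simp [hZ, mem_Icc]
    rw [this]
    exact (isClosed_le continuous_const hcont).inter (isClosed_le hcont continuous_snd)
  have hDZ : Set.range e ⊆ Z := by
    rintro - ⟨n, rfl⟩
    rw [← hinde n]
    have := (hK x (ind n)).mp (hxK n)
    exact this
  have hTZ : T ⊆ Z := hTD.trans (hZclosed.closure_subset_iff.mpr hDZ)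
  have hall : ∀ i : ι, x.2 - ⟪ν, A i.1⟫ ∈ Icc 0 (S i.1) := fun i => hTZ ⟨i, rfl⟩
  -- build the hyperplane
  obtain ⟨H, hHcoe, hHne, hHdim, hHu⟩ := hyp_build ν u hν1 x.2
  refine ⟨H, ⟨hHne, hHdim⟩, ?_, ?_⟩
  · intro hle
    exact hHu (hle (gdir ▸ Submodule.mem_span_singleton_self u))
  · intro I hI
    have hseg' := hIseg I hI
    have hmeet : (I ∩ (H : Set (E d))).Nonempty := by
      rw [hHcoe, hseg']
      exact (seg_meet u (A I) (S I) (hS0 I hI) ν hν1 x.2).mpr (hall ⟨I, hI⟩)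
    obtain ⟨p, hp⟩ := hmeet
    refine ⟨p, ?_⟩
    rw [Set.eq_singleton_iff_unique_mem]
    refine ⟨hp, fun y hy => ?_⟩
    have hu' := seg_unique u (A I) (S I) ν hν1 x.2
    rw [hHcoe, hseg'] at hy hp
    exact hu' y hy p hp
end
end
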